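/- arXiv:2005.02438 — 11 statements merged into one kernel-verified Lean document; each statement's English description precedes it below -/
import Mathlib

section
/- Under the action h·r of GL₂(ℂ) on ℂ⁴, every r ∈ ℂ⁴ lies in the orbit of exactly one of the four points c₀ = (0,0,0,0), c₁ = (1,0,0,0), c₂ = (0,1,0,0), c₃ = (1,0,1,0); that is, the action has exactly four orbits, with these representatives. (Here f_{c₁} = y³, f_{c₂} = −3y²x, and f_{c₃} = y³ − 3x²y.) -/
noncomputable section

open Matrix

/-- The binary cubic form `f_r(x,y) = r₀y³ − 3r₁y²x − 3r₂yx² − r₃x³` attached to `r ∈ ℂ⁴`. -/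
def fcub (r : Fin 4 → ℂ) (x y : ℂ) : ℂ :=
  r 0 * y ^ 3 - 3 * r 1 * y ^ 2 * x - 3 * r 2 * y * x ^ 2 - r 3 * x ^ 3

/-- The 4×4 matrix `M(h)` for `h = [[a,b],[c,d]]`. -/
def Mmat (a b c d : ℂ) : Matrix (Fin 4) (Fin 4) ℂ :=
  !![d ^ 3, -3 * c * d ^ 2, -3 * c ^ 2 * d, -c ^ 3;
     -b * d ^ 2, d * (a * d + 2 * b * c), c * (2 * a * d + b * c), a * c ^ 2;
     -b ^ 2 * d, b * (2 * a * d + b * c), a * (a * d + 2 * b * c), a ^ 2 * c;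
     -b ^ 3, 3 * a * b ^ 2, 3 * a ^ 2 * b, a ^ 3]

/-- The action `h·r := (ad−bc)⁻¹ · M(h) · r` of `GL₂(ℂ)` on `ℂ⁴`. -/
def act (a b c d : ℂ) (r : Fin 4 → ℂ) : Fin 4 → ℂ :=
  (a * d - b * c)⁻¹ • (Mmat a b c d).mulVec r

/-- Matrix form of `Mmat`. -/
def MmatM (h : Matrix (Fin 2) (Fin 2) ℂ) : Matrix (Fin 4) (Fin 4) ℂ :=
  Mmat (h 0 0) (h 0 1) (h 1 0) (h 1 1)

/-- Matrix form of the action. -/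
def actM (h : Matrix (Fin 2) (Fin 2) ℂ) (r : Fin 4 → ℂ) : Fin 4 → ℂ :=
  act (h 0 0) (h 0 1) (h 1 0) (h 1 1) r

/-- Matrix of the dual action: the coefficients of
`(ad−bc)² · f_{h·*s}(x,y) = f_s(dx−by, ay−cx)`. -/
def Mdual (a b c d : ℂ) : Matrix (Fin 4) (Fin 4) ℂ :=
  !![a ^ 3, 3 * a ^ 2 * b, -3 * a * b ^ 2, b ^ 3;
     a ^ 2 * c, a ^ 2 * d + 2 * a * b * c, -(2 * a * b * d + b ^ 2 * c), b ^ 2 * d;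
     -a * c ^ 2, -(2 * a * c * d + b * c ^ 2), a * d ^ 2 + 2 * b * c * d, -b * d ^ 2;
     c ^ 3, 3 * c ^ 2 * d, -3 * c * d ^ 2, d ^ 3]

/-- The dual action `h·*s`: the unique vector satisfying
`fcub (dualAct a b c d s) x y = ((a*d−b*c)²)⁻¹ * fcub s (d*x−b*y) (a*y−c*x)`. -/
def dualAct (a b c d : ℂ) (s : Fin 4 → ℂ) : Fin 4 → ℂ :=
  ((a * d - b * c) ^ 2)⁻¹ • (Mdual a b c d).mulVec s

/-- Matrix form of the dual action. -/
def dualActM (h : Matrix (Fin 2) (Fin 2) ℂ) (s : Fin 4 → ℂ) : Fin 4 → ℂ :=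
  dualAct (h 0 0) (h 0 1) (h 1 0) (h 1 1) s

/-- The linear form `u₁y − u₂x` attached to `u = (u₁,u₂) ∈ ℂ²`. -/
def linForm (u : ℂ × ℂ) (x y : ℂ) : ℂ := u.1 * y - u.2 * x

/-- Two linear forms are independent if `u₁u₂′ − u₂u₁′ ≠ 0`. -/
def indepLF (u v : ℂ × ℂ) : Prop := u.1 * v.2 - u.2 * v.1 ≠ 0

/-- `d₀(r) = −9(r₀r₂ + r₁²)`. -/
def dd0 (r : Fin 4 → ℂ) : ℂ := -9 * (r 0 * r 2 + r 1 ^ 2)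

/-- `d₁(r) = −9(r₀r₃ + r₁r₂)`. -/
def dd1 (r : Fin 4 → ℂ) : ℂ := -9 * (r 0 * r 3 + r 1 * r 2)

/-- `d₂(r) = 9(r₁r₃ − r₂²)`. -/
def dd2 (r : Fin 4 → ℂ) : ℂ := 9 * (r 1 * r 3 - r 2 ^ 2)

/-- The quadratic form `Δ_r(x,y) = d₀(r)y² + d₁(r)xy + d₂(r)x²`. -/
def Δform (r : Fin 4 → ℂ) (x y : ℂ) : ℂ := dd0 r * y ^ 2 + dd1 r * x * y + dd2 r * x ^ 2

/-- The discriminant `D_r = d₁(r)² − 4d₀(r)d₂(r)`. -/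
def Ddisc (r : Fin 4 → ℂ) : ℂ := dd1 r ^ 2 - 4 * dd0 r * dd2 r

/-- The pairing `⟨r,s⟩ = r₀s₀ + 3r₁s₁ + 3r₂s₂ + r₃s₃`. -/
def pairK (r s : Fin 4 → ℂ) : ℂ := r 0 * s 0 + 3 * r 1 * s 1 + 3 * r 2 * s 2 + r 3 * s 3

/-- The Hessian matrix of `f_r` evaluated at `(x,y)`. -/
def HessM (r : Fin 4 → ℂ) (x y : ℂ) : Matrix (Fin 2) (Fin 2) ℂ :=
  !![6 * r 0 * y - 6 * r 1 * x, -6 * r 1 * y - 6 * r 2 * x;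
     -6 * r 1 * y - 6 * r 2 * x, -6 * r 2 * y - 6 * r 3 * x]

/-- The moment map `[r,s]`. -/
def momentMap (r s : Fin 4 → ℂ) : Matrix (Fin 2) (Fin 2) ℂ :=
  !![r 0 * s 0 + 2 * r 1 * s 1 + r 2 * s 2, -(r 1 * s 0) + 2 * r 2 * s 1 + r 3 * s 2;
     -(r 0 * s 1) + 2 * r 1 * s 2 + r 2 * s 3, r 1 * s 1 + 2 * r 2 * s 2 + r 3 * s 3]

/-- The four orbit representatives `c₀ = 0`, `c₁ = (1,0,0,0)`, `c₂ = (0,1,0,0)`,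
`c₃ = (1,0,1,0)`. -/
def cRep : Fin 4 → (Fin 4 → ℂ) :=
  ![![0, 0, 0, 0], ![1, 0, 0, 0], ![0, 1, 0, 0], ![1, 0, 1, 0]]

lemma act_apply (a b c d : ℂ) (r : Fin 4 → ℂ) :
    act a b c d r = (a*d-b*c)⁻¹ • ![
      d^3*r 0 - 3*c*d^2*r 1 - 3*c^2*d*r 2 - c^3*r 3,
      -(b*d^2)*r 0 + d*(a*d+2*b*c)*r 1 + c*(2*a*d+b*c)*r 2 + a*c^2*r 3,
      -(b^2*d)*r 0 + b*(2*a*d+b*c)*r 1 + a*(a*d+2*b*c)*r 2 + a^2*c*r 3,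
      -(b^3)*r 0 + 3*a*b^2*r 1 + 3*a^2*b*r 2 + a^3*r 3 ] := by
  unfold act
  congr 1
  funext j
  fin_cases j <;>
    simp [Mmat, Matrix.mulVec, dotProduct, Fin.sum_univ_four] <;> ring

lemma Mmat_mul (a b c d a' b' c' d' : ℂ) :
    Mmat a b c d * Mmat a' b' c' d' =
      Mmat (a*a'+b*c') (a*b'+b*d') (c*a'+d*c') (c*b'+d*d') := by
  ext i j
  fin_cases i <;> fin_cases j <;>
    simp [Mmat, Matrix.mul_apply, Fin.sum_univ_four] <;> ring

lemma Mmat_one : Mmat 1 0 0 1 = 1 := by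
  ext i j
  fin_cases i <;> fin_cases j <;> simp [Mmat, Matrix.one_apply, Matrix.vecHead, Matrix.vecTail]

lemma act_one (r : Fin 4 → ℂ) : act 1 0 0 1 r = r := by
  simp [act, Mmat_one]

lemma act_comp (a b c d a' b' c' d' : ℂ) (r : Fin 4 → ℂ) :
    act a b c d (act a' b' c' d' r) =
      act (a*a'+b*c') (a*b'+b*d') (c*a'+d*c') (c*b'+d*d') r := by
  unfold act
  rw [Matrix.mulVec_smul, smul_smul, Matrix.mulVec_mulVec, Mmat_mul]
  congr 1
  rw [← mul_inv]
  congr 1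
  ring

def rel (r s : Fin 4 → ℂ) : Prop :=
  ∃ a b c d : ℂ, a * d - b * c ≠ 0 ∧ act a b c d s = r

lemma rel_refl (r : Fin 4 → ℂ) : rel r r :=
  ⟨1, 0, 0, 1, by norm_num, act_one r⟩

lemma rel_trans {r s t : Fin 4 → ℂ} (h1 : rel r s) (h2 : rel s t) : rel r t := by
  obtain ⟨a, b, c, d, hd, rfl⟩ := h1
  obtain ⟨a', b', c', d', hd', rfl⟩ := h2
  refine ⟨a*a'+b*c', a*b'+b*d', c*a'+d*c', c*b'+d*d', ?_, (act_comp ..).symm⟩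
  have : (a*a'+b*c')*(c*b'+d*d') - (a*b'+b*d')*(c*a'+d*c')
      = (a*d-b*c) * (a'*d'-b'*c') := by ring
  rw [this]
  exact mul_ne_zero hd hd'

lemma rel_symm {r s : Fin 4 → ℂ} (h : rel r s) : rel s r := by
  obtain ⟨a, b, c, d, hd, rfl⟩ := h
  refine ⟨d/(a*d-b*c), -b/(a*d-b*c), -c/(a*d-b*c), a/(a*d-b*c), ?_, ?_⟩
  · have key : (d/(a*d-b*c) * (a/(a*d-b*c)) - -b/(a*d-b*c) * (-c/(a*d-b*c)))
        * (a*d-b*c) = 1 := by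
      field_simp
      rw [mul_comm d a]; exact div_self hd
    exact left_ne_zero_of_mul_eq_one key
  · rw [act_comp]
    have e1 : d/(a*d-b*c)*a + -b/(a*d-b*c)*c = 1 := by
      rw [div_mul_eq_mul_div, div_mul_eq_mul_div, ← add_div, div_eq_one_iff_eq hd]
      ring
    have e2 : d/(a*d-b*c)*b + -b/(a*d-b*c)*d = 0 := by ring
    have e3 : -c/(a*d-b*c)*a + a/(a*d-b*c)*c = 0 := by ring
    have e4 : -c/(a*d-b*c)*b + a/(a*d-b*c)*d = 1 := by
      rw [div_mul_eq_mul_div, div_mul_eq_mul_div, ← add_div, div_eq_one_iff_eq hd]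
      ring
    rw [e1, e2, e3, e4, act_one]
lemma act_zero (a b c d : ℂ) : act a b c d 0 = 0 := by
  simp [act]

lemma act_scalar {k : ℂ} (hk : k ≠ 0) (r : Fin 4 → ℂ) : act k 0 0 k r = k • r := by
  funext j
  fin_cases j <;>
    · simp only [act_apply]
      simp
      field_simp



lemma dd_act {a b c d : ℂ} (hd : a * d - b * c ≠ 0) (r : Fin 4 → ℂ) :
    dd0 (act a b c d r) = dd0 r * d^2 + dd1 r * (c*d) + dd2 r * c^2 ∧
    dd1 (act a b c d r) = 2 * dd0 r * (b*d) + dd1 r * (a*d+b*c) + 2 * dd2 r * (a*c) ∧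
    dd2 (act a b c d r) = dd0 r * b^2 + dd1 r * (a*b) + dd2 r * a^2 := by
  refine ⟨?_, ?_, ?_⟩ <;>
    · simp only [act_apply, dd0, dd1, dd2, Pi.smul_apply, smul_eq_mul,
        Matrix.cons_val_zero, Matrix.cons_val_one, Matrix.head_cons,
        Matrix.cons_val_two, Matrix.tail_cons, Matrix.cons_val_three]
      field_simp
      ring

lemma Ddisc_act {a b c d : ℂ} (hd : a * d - b * c ≠ 0) (r : Fin 4 → ℂ) :
    Ddisc (act a b c d r) = (a*d-b*c)^2 * Ddisc r := by
  obtain ⟨h0, h1, h2⟩ := dd_act hd r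
  unfold Ddisc
  rw [h0, h1, h2]
  ring

lemma rel_dd {r s : Fin 4 → ℂ}
    (h : rel r s) (hs : dd0 s = 0 ∧ dd1 s = 0 ∧ dd2 s = 0) :
    dd0 r = 0 ∧ dd1 r = 0 ∧ dd2 r = 0 := by
  obtain ⟨a, b, c, d, hd, rfl⟩ := h
  obtain ⟨p0, p1, p2⟩ := dd_act hd s
  rw [p0, p1, p2, hs.1, hs.2.1, hs.2.2]
  norm_num

lemma rel_Ddisc {r s : Fin 4 → ℂ} (h : rel r s) (hs : Ddisc s = 0) : Ddisc r = 0 := by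
  obtain ⟨a, b, c, d, hd, rfl⟩ := h
  rw [Ddisc_act hd, hs, mul_zero]

lemma rel_zero {r s : Fin 4 → ℂ} (h : rel r s) (hs : s = 0) : r = 0 := by
  obtain ⟨a, b, c, d, hd, rfl⟩ := h
  rw [hs, act_zero]



lemma cRep_zero : cRep 0 = 0 := by
  funext j; fin_cases j <;> rfl

lemma cRep1_ne : cRep 1 ≠ 0 := by
  intro h
  have := congrFun h 0
  norm_num [cRep, Matrix.vecHead, Matrix.vecTail, Matrix.cons_val_two, Matrix.cons_val_three] at this

lemma cRep2_ne : cRep 2 ≠ 0 := by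
  intro h
  have := congrFun h 1
  norm_num [cRep, Matrix.vecHead, Matrix.vecTail, Matrix.cons_val_two, Matrix.cons_val_three] at this

lemma cRep3_ne : cRep 3 ≠ 0 := by
  intro h
  have := congrFun h 0
  norm_num [cRep, Matrix.vecHead, Matrix.vecTail, Matrix.cons_val_two, Matrix.cons_val_three] at this

lemma P1 : dd0 (cRep 1) = 0 ∧ dd1 (cRep 1) = 0 ∧ dd2 (cRep 1) = 0 := by
  norm_num [dd0, dd1, dd2, cRep, Matrix.vecHead, Matrix.vecTail, Matrix.cons_val_two, Matrix.cons_val_three]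

lemma D1 : Ddisc (cRep 1) = 0 := by norm_num [Ddisc, dd0, dd1, dd2, cRep, Matrix.vecHead, Matrix.vecTail, Matrix.cons_val_two, Matrix.cons_val_three]

lemma D2 : Ddisc (cRep 2) = 0 := by norm_num [Ddisc, dd0, dd1, dd2, cRep, Matrix.vecHead, Matrix.vecTail, Matrix.cons_val_two, Matrix.cons_val_three]

lemma rel_cRep_inj {i j : Fin 4} (h : rel (cRep i) (cRep j)) : i = j := by
  have h' := rel_symm h
  fin_cases i <;> fin_cases j <;>
  first
  | rfl
  | exact absurd (rel_zero h cRep_zero) cRep1_ne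
  | exact absurd (rel_zero h cRep_zero) cRep2_ne
  | exact absurd (rel_zero h cRep_zero) cRep3_ne
  | exact absurd (rel_zero h' cRep_zero) cRep1_ne
  | exact absurd (rel_zero h' cRep_zero) cRep2_ne
  | exact absurd (rel_zero h' cRep_zero) cRep3_ne
  | exact absurd (rel_dd h P1).1 (by norm_num [dd0, cRep, Matrix.vecHead, Matrix.vecTail, Matrix.cons_val_two, Matrix.cons_val_three])
  | exact absurd (rel_dd h' P1).1 (by norm_num [dd0, cRep, Matrix.vecHead, Matrix.vecTail, Matrix.cons_val_two, Matrix.cons_val_three])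
  | exact absurd (rel_Ddisc h D1) (by norm_num [Ddisc, dd0, dd1, dd2, cRep, Matrix.vecHead, Matrix.vecTail, Matrix.cons_val_two, Matrix.cons_val_three])
  | exact absurd (rel_Ddisc h' D1) (by norm_num [Ddisc, dd0, dd1, dd2, cRep, Matrix.vecHead, Matrix.vecTail, Matrix.cons_val_two, Matrix.cons_val_three])
  | exact absurd (rel_Ddisc h D2) (by norm_num [Ddisc, dd0, dd1, dd2, cRep, Matrix.vecHead, Matrix.vecTail, Matrix.cons_val_two, Matrix.cons_val_three])
  | exact absurd (rel_Ddisc h' D2) (by norm_num [Ddisc, dd0, dd1, dd2, cRep, Matrix.vecHead, Matrix.vecTail, Matrix.cons_val_two, Matrix.cons_val_three])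



lemma mulVec_Mmat (a b c d : ℂ) (r : Fin 4 → ℂ) :
    (Mmat a b c d).mulVec r = ![
      d^3*r 0 - 3*c*d^2*r 1 - 3*c^2*d*r 2 - c^3*r 3,
      -(b*d^2)*r 0 + d*(a*d+2*b*c)*r 1 + c*(2*a*d+b*c)*r 2 + a*c^2*r 3,
      -(b^2*d)*r 0 + b*(2*a*d+b*c)*r 1 + a*(a*d+2*b*c)*r 2 + a^2*c*r 3,
      -(b^3)*r 0 + 3*a*b^2*r 1 + 3*a^2*b*r 2 + a^3*r 3 ] := by
  funext j
  fin_cases j <;>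
    simp [Mmat, Matrix.mulVec, dotProduct, Fin.sum_univ_four] <;> ring

lemma act_eq_of_mulVec {a b c d : ℂ} (hδ : a*d - b*c ≠ 0) {s t : Fin 4 → ℂ}
    (h : (Mmat a b c d).mulVec s = (a*d-b*c) • t) : act a b c d s = t := by
  unfold act
  rw [h, smul_smul, inv_mul_cancel₀ hδ, one_smul]

lemma exists_sqrt (v : ℂ) : ∃ w : ℂ, w^2 = v :=
  IsAlgClosed.exists_pow_nat_eq v (n := 2) (by norm_num)

lemma cubic_roots (p q : ℂ) :
    ∃ l1 l2 l3 : ℂ, l1 + l2 + l3 = 0 ∧ l1*l2 + l1*l3 + l2*l3 = p ∧ l1*l2*l3 = -q := by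
  have hdeg : (Polynomial.X^3 + Polynomial.C p * Polynomial.X + Polynomial.C q : Polynomial ℂ).degree = 3 := by
    compute_degree!
  obtain ⟨z, hz⟩ := IsAlgClosed.exists_root
    (Polynomial.X^3 + Polynomial.C p * Polynomial.X + Polynomial.C q : Polynomial ℂ)
    (by rw [hdeg]; norm_num)
  have hz' : z^3 + p*z + q = 0 := by
    simpa [Polynomial.IsRoot] using hz
  obtain ⟨w, hw⟩ := exists_sqrt (-3*z^2 - 4*p)
  exact ⟨z, (-z+w)/2, (-z-w)/2, by ring,
    by linear_combination (-(1:ℂ)/4) * hw,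
    by linear_combination hz' + (-z/4) * hw⟩

lemma stepA {r : Fin 4 → ℂ} (hr : r ≠ 0) : ∃ s : Fin 4 → ℂ, rel s r ∧ s 0 ≠ 0 := by
  by_cases h0 : r 0 ≠ 0
  · exact ⟨r, rel_refl r, h0⟩
  push_neg at h0
  by_cases h3 : r 3 ≠ 0
  · refine ⟨act 0 (-1) 1 0 r, ⟨0, -1, 1, 0, by norm_num, rfl⟩, ?_⟩
    have hv : act 0 (-1) 1 0 r 0 = -r 3 := by
      norm_num [act_apply]
    rw [hv]
    exact neg_ne_zero.mpr h3
  push_neg at h3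
  by_cases h12 : r 1 + r 2 ≠ 0
  · refine ⟨act 1 0 1 1 r, ⟨1, 0, 1, 1, by norm_num, rfl⟩, ?_⟩
    have hv : act 1 0 1 1 r 0 = r 0 - 3*r 1 - 3*r 2 - r 3 := by
      norm_num [act_apply]
    rw [hv, h0, h3]
    intro hh
    apply h12
    linear_combination (-(1:ℂ)/3) * hh
  push_neg at h12
  by_cases h12' : r 1 - r 2 ≠ 0
  · refine ⟨act 1 0 (-1) 1 r, ⟨1, 0, -1, 1, by norm_num, rfl⟩, ?_⟩
    have hv : act 1 0 (-1) 1 r 0 = r 0 + 3*r 1 - 3*r 2 + r 3 := by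
      norm_num [act_apply]
    rw [hv, h0, h3]
    intro hh
    apply h12'
    linear_combination ((1:ℂ)/3) * hh
  push_neg at h12'
  exfalso
  apply hr
  have hr1 : r 1 = 0 := by linear_combination (h12 + h12')/2
  have hr2 : r 2 = 0 := by linear_combination (h12 - h12')/2
  funext j
  fin_cases j
  · exact h0
  · exact hr1
  · exact hr2
  · exact h3

lemma stepB {s : Fin 4 → ℂ} (h0 : s 0 ≠ 0) :
    ∃ t : Fin 4 → ℂ, rel t s ∧ t 0 ≠ 0 ∧ t 1 = 0 := by
  refine ⟨act 1 (s 1 / s 0) 0 1 s, ⟨1, s 1 / s 0, 0, 1, by norm_num, rfl⟩, ?_, ?_⟩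
  · have hv : act 1 (s 1/s 0) 0 1 s 0 = s 0 := by
      norm_num [act_apply]
    rw [hv]
    exact h0
  · have hv : act 1 (s 1/s 0) 0 1 s 1 = s 1 - (s 1/s 0)*s 0 := by
      norm_num [act_apply]
      ring
    rw [hv]
    field_simp
    ring

lemma case1 {t : Fin 4 → ℂ} (h0 : t 0 ≠ 0) (h1 : t 1 = 0) (h2 : t 2 = 0) (h3 : t 3 = 0) :
    rel t (cRep 1) := by
  have hδ : (t 0)⁻¹ * 1 - 0 * 0 ≠ 0 := by simpa using inv_ne_zero h0
  refine ⟨(t 0)⁻¹, 0, 0, 1, hδ, act_eq_of_mulVec hδ ?_⟩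
  funext j
  fin_cases j <;>
    (simp [mulVec_Mmat, cRep, Matrix.vecHead, Matrix.vecTail, h1, h2, h3]; try field_simp)

lemma case2 {t : Fin 4 → ℂ} {α : ℂ} (h0 : t 0 ≠ 0) (hα : α ≠ 0) (h1 : t 1 = 0)
    (h2 : t 2 = t 0 * α^2) (h3 : t 3 = -2 * t 0 * α^3) :
    rel t (cRep 2) := by
  have hδ : (2*α) * (-α*t 0) - (α^2*t 0) * 1 ≠ 0 := by
    have hq : (2*α) * (-α*t 0) - (α^2*t 0) * 1 = -3*(α^2*t 0) := by ring
    rw [hq]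
    exact mul_ne_zero (by norm_num) (mul_ne_zero (pow_ne_zero 2 hα) h0)
  refine ⟨2*α, α^2*t 0, 1, -α*t 0, hδ, act_eq_of_mulVec hδ ?_⟩
  funext j
  fin_cases j <;>
    (simp [mulVec_Mmat, cRep, Matrix.vecHead, Matrix.vecTail, h1, h2, h3]; try ring; try tauto)

lemma case3 {t : Fin 4 → ℂ} {l1 l2 e : ℂ} (h0 : t 0 ≠ 0) (h1 : t 1 = 0)
    (ht2 : t 2 = -t 0 * (l1*l2 + l1*(-l1-l2) + l2*(-l1-l2))/3)
    (ht3 : t 3 = t 0 * (l1*l2*(-l1-l2)))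
    (he : e^2 = 3)
    (h12 : l1 ≠ l2) (h13 : l1 ≠ -l1-l2) (h23 : l2 ≠ -l1-l2) :
    rel t (cRep 3) := by
  have he0 : e ≠ 0 := by
    intro h
    rw [h] at he
    norm_num at he
  have n1 : (2*l2+l1) ≠ 0 := fun h => h23 (by linear_combination h)
  have n2 : l2 - l1 ≠ 0 := sub_ne_zero.mpr (Ne.symm h12)
  have n3 : (2*l1+l2) ≠ 0 := fun h => h13 (by linear_combination h)
  have hδeq : (e*(2*l2+l1)) * (2*l2^2+2*l1*l2-l1^2) - (l1*e*(2*l2+l1)) * (3*l1)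
      = 2*e*(2*l2+l1)*(l2-l1)*(2*l1+l2) := by ring
  have hδ : (e*(2*l2+l1)) * (2*l2^2+2*l1*l2-l1^2) - (l1*e*(2*l2+l1)) * (3*l1) ≠ 0 := by
    rw [hδeq]
    exact mul_ne_zero (mul_ne_zero (mul_ne_zero (mul_ne_zero two_ne_zero he0) n1) n2) n3
  have hkne : t 0*(l2-l1)*(2*l2+l1)*(2*l1+l2)*e/3 ≠ 0 := by
    apply div_ne_zero _ three_ne_zero
    exact mul_ne_zero (mul_ne_zero (mul_ne_zero (mul_ne_zero h0 n2) n1) n3) he0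
  have hact : act (e*(2*l2+l1)) (l1*e*(2*l2+l1)) (3*l1) (2*l2^2+2*l1*l2-l1^2) t
      = (t 0*(l2-l1)*(2*l2+l1)*(2*l1+l2)*e/3) • cRep 3 := by
    apply act_eq_of_mulVec hδ
    funext j
    fin_cases j
    · simp [mulVec_Mmat, cRep, Matrix.vecHead, Matrix.vecTail]
      simp only [h1, ht2, ht3]
      linear_combination ((-(2:ℂ)/3)*t 0*((2*l2+l1)*(l2-l1)*(2*l1+l2))^2) * he
    · simp [mulVec_Mmat, cRep, Matrix.vecHead, Matrix.vecTail]
      simp only [h1, ht2, ht3]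
      ring
    · simp [mulVec_Mmat, cRep, Matrix.vecHead, Matrix.vecTail]
      simp only [h1, ht2, ht3]
      ring
    · simp [mulVec_Mmat, cRep, Matrix.vecHead, Matrix.vecTail]
      simp only [h1, ht2, ht3]
      ring
  have r1 : rel ((t 0*(l2-l1)*(2*l2+l1)*(2*l1+l2)*e/3) • cRep 3) t :=
    ⟨_, _, _, _, hδ, hact⟩
  have r2 : rel ((t 0*(l2-l1)*(2*l2+l1)*(2*l1+l2)*e/3) • cRep 3) (cRep 3) :=
    ⟨_, _, _, _, by simpa using mul_ne_zero hkne hkne, act_scalar hkne (cRep 3)⟩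
  exact rel_trans (rel_symm r1) r2

lemma exists_rep (r : Fin 4 → ℂ) : ∃ i : Fin 4, rel r (cRep i) := by
  by_cases hr : r = 0
  · refine ⟨0, 1, 0, 0, 1, by norm_num, ?_⟩
    rw [act_one, cRep_zero, hr]
  obtain ⟨s, hsr, hs0⟩ := stepA hr
  obtain ⟨t, hts, ht0, ht1⟩ := stepB hs0
  have hrt : rel r t := rel_symm (rel_trans hts hsr)
  by_cases h23 : t 2 = 0 ∧ t 3 = 0
  · exact ⟨1, rel_trans hrt (case1 ht0 ht1 h23.1 h23.2)⟩
  by_cases hD : t 0 * t 3^2 = 4 * t 2^3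
  · have ht2 : t 2 ≠ 0 := by
      intro h2
      apply h23
      have h3sq : t 0 * t 3^2 = 0 := by rw [hD, h2]; ring
      rcases mul_eq_zero.mp h3sq with h | h
      · exact absurd h ht0
      · exact ⟨h2, pow_eq_zero_iff (by norm_num) |>.mp h⟩
    obtain ⟨β, hβ⟩ := exists_sqrt (t 2 / t 0)
    have hb2 : t 2 = t 0 * β^2 := by rw [hβ]; field_simp
    have hβ0 : β ≠ 0 := by
      intro h
      rw [h] at hb2
      norm_num at hb2
      exact ht2 hb2
    have hprod : (t 3 - 2*t 0*β^3) * (t 3 + 2*t 0*β^3) = 0 := by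
      have hz : t 0 * ((t 3 - 2*t 0*β^3) * (t 3 + 2*t 0*β^3)) = 0 := by
        linear_combination hD + (4*(t 2^2 + t 2*(t 0*β^2) + (t 0*β^2)^2))*hb2
      rcases mul_eq_zero.mp hz with h | h
      · exact absurd h ht0
      · exact h
    rcases mul_eq_zero.mp hprod with h | h
    · refine ⟨2, rel_trans hrt (case2 ht0 (neg_ne_zero.mpr hβ0) ht1 ?_ ?_)⟩
      · rw [hb2]; ring
      · have h3 : t 3 = 2*t 0*β^3 := by linear_combination h
        rw [h3]; ring
    · refine ⟨2, rel_trans hrt (case2 ht0 hβ0 ht1 ?_ ?_)⟩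
      · rw [hb2]
      · have h3 : t 3 = -2*t 0*β^3 := by linear_combination h
        rw [h3]
  · obtain ⟨l1, l2, l3, hsum, he2, he3⟩ := cubic_roots (-3*t 2/t 0) (-t 3/t 0)
    have hl3 : l3 = -l1 - l2 := by linear_combination hsum
    subst hl3
    have ht2 : t 2 = -t 0 * (l1*l2 + l1*(-l1-l2) + l2*(-l1-l2))/3 := by
      rw [he2]
      field_simp
    have ht3 : t 3 = t 0 * (l1*l2*(-l1-l2)) := by
      rw [he3]
      field_simp
    have hd12 : l1 ≠ l2 := by
      intro hEq
      apply hD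
      rw [ht2, ht3, hEq]
      ring
    have hd13 : l1 ≠ -l1-l2 := by
      intro hEq
      apply hD
      rw [ht2, ht3]
      have h2' : l2 = -2*l1 := by linear_combination hEq
      rw [h2']
      ring
    have hd23 : l2 ≠ -l1-l2 := by
      intro hEq
      apply hD
      rw [ht2, ht3]
      have h1' : l1 = -2*l2 := by linear_combination hEq
      rw [h1']
      ring
    obtain ⟨e, he⟩ := exists_sqrt 3
    exact ⟨3, rel_trans hrt (case3 ht0 ht1 ht2 ht3 he hd12 hd13 hd23)⟩


/-- every `r ∈ ℂ⁴` lies in the orbit of exactly one of the four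
representatives `c₀, c₁, c₂, c₃`. -/
theorem stmt2 (r : Fin 4 → ℂ) :
    ∃! i : Fin 4, ∃ a b c d : ℂ, a * d - b * c ≠ 0 ∧ act a b c d (cRep i) = r := by
  obtain ⟨i, hi⟩ := exists_rep r
  refine ⟨i, hi, ?_⟩
  intro j hj
  exact rel_cRep_inj (rel_trans (rel_symm hj) hi)

end
end

section
/- For every r ∈ ℂ⁴ with f_r = u³ for some nonzero linear form u, the stabilizer {h ∈ GL₂(ℂ) : h·r = r} is conjugate in GL₂(ℂ) to the subgroup {[[d²,0],[c,d]] : c ∈ ℂ, d ∈ ℂ, d ≠ 0}. In particular, the stabilizer of c₁ = (1,0,0,0) (so f_{c₁} = y³) is exactly the set {[[d²,0],[c,d]] : c ∈ ℂ, d ≠ 0}. -/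
noncomputable section

open Matrix

lemma MmatM_mul (h1 h2 : Matrix (Fin 2) (Fin 2) ℂ) :
    MmatM (h1 * h2) = MmatM h1 * MmatM h2 := by
  ext i j
  fin_cases i <;> fin_cases j <;>
    simp [MmatM, Mmat, Matrix.mul_apply, Fin.sum_univ_two, Fin.sum_univ_four] <;> ring

lemma actM_eq (h : Matrix (Fin 2) (Fin 2) ℂ) (r : Fin 4 → ℂ) :
    actM h r = (h.det)⁻¹ • (MmatM h).mulVec r := by
  simp [actM, act, MmatM, Matrix.det_fin_two]

lemma actM_mul (h1 h2 : Matrix (Fin 2) (Fin 2) ℂ) (r : Fin 4 → ℂ) :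
    actM (h1 * h2) r = actM h1 (actM h2 r) := by
  simp [actM_eq, MmatM_mul, Matrix.det_mul, mul_inv, Matrix.mulVec_smul,
    Matrix.mulVec_mulVec, smul_smul, mul_comm]

lemma actM_one (r : Fin 4 → ℂ) : actM 1 r = r := by
  funext i
  fin_cases i <;>
    simp [actM, act, Mmat, Matrix.mulVec, dotProduct, Fin.sum_univ_four,
      Matrix.one_apply]

lemma stabC1 :
    {h : Matrix (Fin 2) (Fin 2) ℂ | h.det ≠ 0 ∧ actM h ![1, 0, 0, 0] = ![1, 0, 0, 0]} =
      {m : Matrix (Fin 2) (Fin 2) ℂ | ∃ c d : ℂ, d ≠ 0 ∧ m = !![d ^ 2, 0; c, d]} := by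
  ext h
  simp only [Set.mem_setOf_eq]
  constructor
  · rintro ⟨hd, hact⟩
    set a := h 0 0; set b := h 0 1; set c := h 1 0; set d := h 1 1
    have hD : a * d - b * c ≠ 0 := by
      rw [Matrix.det_fin_two] at hd; exact hd
    have e3 : (a * d - b * c)⁻¹ * (-b ^ 3) = 0 := by
      have := congrFun hact 3
      simpa [actM, act, Mmat, Matrix.mulVec, dotProduct, Fin.sum_univ_four] using this
    have hb : b = 0 := by
      have : b ^ 3 = 0 := by
        field_simp at e3
        simpa using e3
      exact pow_eq_zero_iff (by norm_num) |>.mp this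
    have had : a * d ≠ 0 := by simpa [hb] using hD
    have ha : a ≠ 0 := fun h' => had (by simp [h'])
    have hdne : d ≠ 0 := fun h' => had (by simp [h'])
    have e0 : (a * d - b * c)⁻¹ * d ^ 3 = 1 := by
      have := congrFun hact 0
      simpa [actM, act, Mmat, Matrix.mulVec, dotProduct, Fin.sum_univ_four] using this
    have haeq : a = d ^ 2 := by
      rw [hb] at e0
      field_simp at e0
      exact (mul_right_cancel₀ hdne (show d ^ 2 * d = a * d by linear_combination e0)).symm
    refine ⟨c, d, hdne, ?_⟩
    ext i j
    fin_cases i <;> fin_cases j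
    · simpa using haeq
    · simpa using hb
    · simp [c]
    · simp [d]
  · rintro ⟨c, d, hdne, rfl⟩
    have hdet : (!![d ^ 2, 0; c, d] : Matrix (Fin 2) (Fin 2) ℂ).det = d ^ 3 := by
      rw [Matrix.det_fin_two]; simp; ring
    constructor
    · rw [hdet]; exact pow_ne_zero 3 hdne
    · funext i
      have hD : d ^ 2 * d - 0 * c = d ^ 3 := by ring
      fin_cases i <;>
        simp [actM, act, Mmat, Matrix.mulVec, dotProduct, Fin.sum_univ_four, hD]
      all_goals field_simp
      all_goals ring

lemma part1 (r : Fin 4 → ℂ) (u : ℂ × ℂ) (hu : u ≠ 0)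
    (hf : ∀ x y : ℂ, fcub r x y = (linForm u x y) ^ 3) :
    ∃ g : Matrix (Fin 2) (Fin 2) ℂ, g.det ≠ 0 ∧
      {h : Matrix (Fin 2) (Fin 2) ℂ | h.det ≠ 0 ∧ actM h r = r} =
        (fun m => g * m * g⁻¹) ''
          {m : Matrix (Fin 2) (Fin 2) ℂ | ∃ c d : ℂ, d ≠ 0 ∧ m = !![d ^ 2, 0; c, d]} := by
  have e1 := hf 0 1; have e2 := hf 1 0; have e3 := hf 1 1; have e4 := hf (-1) 1
  simp only [fcub, linForm] at e1 e2 e3 e4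
  have h0 : r 0 = u.1 ^ 3 := by linear_combination e1
  have h3 : r 3 = u.2 ^ 3 := by linear_combination -e2
  have h1 : r 1 = u.1 ^ 2 * u.2 := by
    linear_combination (1/6) * e4 - (1/6) * e3 + (1/3) * e2
  have h2 : r 2 = -(u.1 * u.2 ^ 2) := by
    linear_combination (1/3) * e1 - (1/6) * e3 - (1/6) * e4
  obtain ⟨a, c, hac⟩ : ∃ a c : ℂ, a * u.1 + c * u.2 = 1 := by
    by_cases hx : u.1 = 0
    · have hy : u.2 ≠ 0 := fun h' => hu (Prod.ext hx h')
      exact ⟨0, u.2⁻¹, by field_simp; ring⟩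
    · exact ⟨u.1⁻¹, 0, by field_simp; ring⟩
  set g : Matrix (Fin 2) (Fin 2) ℂ := !![a, -u.2; c, u.1] with hgdef
  have hgdet : g.det = 1 := by
    rw [Matrix.det_fin_two]; simp [hgdef]; linear_combination hac
  have hg : g.det ≠ 0 := by rw [hgdet]; exact one_ne_zero
  have hD2 : a * u.1 + u.2 * c = 1 := by linear_combination hac
  have hgc1 : actM g ![1, 0, 0, 0] = r := by
    funext i
    fin_cases i <;>
      simp [actM, act, Mmat, Matrix.mulVec, dotProduct, Fin.sum_univ_four,
        hgdef, hD2, h0, h1, h2, h3] <;> ring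
  have hgu : IsUnit g.det := by rw [hgdet]; exact isUnit_one
  have hginv : g * g⁻¹ = 1 := Matrix.mul_nonsing_inv g hgu
  have hinvg : g⁻¹ * g = 1 := Matrix.nonsing_inv_mul g hgu
  have hgidet : g⁻¹.det ≠ 0 := by
    simp [Matrix.det_nonsing_inv, hgdet]
  refine ⟨g, hg, ?_⟩
  ext h
  simp only [Set.mem_setOf_eq, Set.mem_image]
  constructor
  · rintro ⟨hhd, hhr⟩
    refine ⟨g⁻¹ * h * g, ?_, ?_⟩
    · have hm : (g⁻¹ * h * g).det ≠ 0 := by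
        rw [Matrix.det_mul, Matrix.det_mul]
        exact mul_ne_zero (mul_ne_zero hgidet hhd) hg
      have hact : actM (g⁻¹ * h * g) ![1, 0, 0, 0] = ![1, 0, 0, 0] := by
        rw [mul_assoc, actM_mul, actM_mul, hgc1, hhr, ← hgc1, ← actM_mul, hinvg, actM_one]
      have : (g⁻¹ * h * g) ∈ {h : Matrix (Fin 2) (Fin 2) ℂ |
          h.det ≠ 0 ∧ actM h ![1, 0, 0, 0] = ![1, 0, 0, 0]} := ⟨hm, hact⟩
      rwa [stabC1] at this
    · simp only [← mul_assoc]
      rw [hginv, one_mul, mul_assoc, hginv, mul_one]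
  · rintro ⟨m, hmS, rfl⟩
    have hmem : m ∈ {m : Matrix (Fin 2) (Fin 2) ℂ | ∃ c d : ℂ, d ≠ 0 ∧
        m = !![d ^ 2, 0; c, d]} := hmS
    rw [← stabC1] at hmem
    obtain ⟨hmd, hmact⟩ := hmem
    refine ⟨?_, ?_⟩
    · rw [Matrix.det_mul, Matrix.det_mul]
      exact mul_ne_zero (mul_ne_zero hg hmd) hgidet
    · rw [← hgc1, ← actM_mul]
      have : g * m * g⁻¹ * g = g * m := by rw [mul_assoc (g * m), hinvg, mul_one]
      rw [this, actM_mul, hmact]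

/-- if `f_r = u³` for a nonzero linear form `u`, the stabilizer of `r` is
conjugate in `GL₂(ℂ)` to `{[[d²,0],[c,d]] : c ∈ ℂ, d ≠ 0}`; in particular the stabilizer
of `c₁ = (1,0,0,0)` is exactly this subgroup. -/
theorem stmt4 :
    (∀ r : Fin 4 → ℂ, ∀ u : ℂ × ℂ, u ≠ 0 →
      (∀ x y : ℂ, fcub r x y = (linForm u x y) ^ 3) →
      ∃ g : Matrix (Fin 2) (Fin 2) ℂ, g.det ≠ 0 ∧
        {h : Matrix (Fin 2) (Fin 2) ℂ | h.det ≠ 0 ∧ actM h r = r} =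
          (fun m => g * m * g⁻¹) ''
            {m : Matrix (Fin 2) (Fin 2) ℂ | ∃ c d : ℂ, d ≠ 0 ∧ m = !![d ^ 2, 0; c, d]}) ∧
    {h : Matrix (Fin 2) (Fin 2) ℂ | h.det ≠ 0 ∧ actM h ![1, 0, 0, 0] = ![1, 0, 0, 0]} =
      {m : Matrix (Fin 2) (Fin 2) ℂ | ∃ c d : ℂ, d ≠ 0 ∧ m = !![d ^ 2, 0; c, d]} :=
  ⟨fun r u hu hf => part1 r u hu hf, stabC1⟩

end
end

section
/- For every invertible h = [[a,b],[c,d]] ∈ GL₂(ℂ) and all r, s ∈ ℂ⁴, one has ⟨h·r, h·*s⟩ = ⟨r, s⟩; that is, the pairing ⟨,⟩ is invariant under the simultaneous action of GL₂(ℂ) on ℂ⁴ and the dual action on ℂ⁴. -/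
noncomputable section

open Matrix

/-- the pairing `⟨,⟩` is invariant under the simultaneous action of
`GL₂(ℂ)` on `ℂ⁴` and the dual action on `ℂ⁴`. -/
theorem stmt10 (a b c d : ℂ) (hdet : a * d - b * c ≠ 0) (r s : Fin 4 → ℂ) :
    pairK (act a b c d r) (dualAct a b c d s) = pairK r s := by
  have h3 : (a*d-b*c)^3 ≠ 0 := pow_ne_zero _ hdet
  unfold pairK act dualAct Mmat Mdual
  simp only [mulVec, dotProduct, Fin.sum_univ_four, Pi.smul_apply, smul_eq_mul]
  simp only [of_apply, cons_val]
  field_simp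
  ring

end
end

section
/- Let r, s ∈ ℂ⁴ and suppose f_r = u·u′·u″ is a product of three pairwise independent linear forms. Then the moment-map matrix [r,s] is the zero 2×2 matrix if and only if s = 0. -/
noncomputable section

open Matrix

/-- if `f_r` is a product of three pairwise independent linear forms, then
`[r,s] = 0` iff `s = 0`. -/
theorem stmt12 (r s : Fin 4 → ℂ) (u u' u'' : ℂ × ℂ)
    (h1 : indepLF u u') (h2 : indepLF u u'') (h3 : indepLF u' u'')
    (hr : ∀ x y : ℂ, fcub r x y = linForm u x y * linForm u' x y * linForm u'' x y) :
    momentMap r s = 0 ↔ s = 0 := by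
  constructor
  · intro h
    simp only [fcub, linForm] at hr
    have hr0 : r 0 = u.1 * u'.1 * u''.1 := by linear_combination hr 0 1
    have hr3 : r 3 = u.2 * u'.2 * u''.2 := by linear_combination -hr 1 0
    have hr1 : r 1 = (u.1*u'.1*u''.2 + u.1*u'.2*u''.1 + u.2*u'.1*u''.1) / 3 := by
      linear_combination (1/6 : ℂ) * hr (-1) 1 - (1/6 : ℂ) * hr 1 1 + (1/3 : ℂ) * hr 1 0
    have hr2 : r 2 = -(u.1*u'.2*u''.2 + u.2*u'.1*u''.2 + u.2*u'.2*u''.1) / 3 := by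
      linear_combination (1/3 : ℂ) * hr 0 1 - (1/6 : ℂ) * hr 1 1 - (1/6 : ℂ) * hr (-1) 1
    have e0 : r 0 * s 0 + 2 * r 1 * s 1 + r 2 * s 2 = 0 := by
      have := congrFun (congrFun h 0) 0; simpa [momentMap] using this
    have e1 : -(r 1 * s 0) + 2 * r 2 * s 1 + r 3 * s 2 = 0 := by
      have := congrFun (congrFun h 0) 1; simpa [momentMap] using this
    have e2 : -(r 0 * s 1) + 2 * r 1 * s 2 + r 2 * s 3 = 0 := by
      have := congrFun (congrFun h 1) 0; simpa [momentMap] using this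
    have e3 : r 1 * s 1 + 2 * r 2 * s 2 + r 3 * s 3 = 0 := by
      have := congrFun (congrFun h 1) 1; simpa [momentMap] using this
    simp only [hr0, hr1, hr2, hr3] at e0 e1 e2 e3
    have hP : ((u.1*u'.2 - u.2*u'.1) * (u.1*u''.2 - u.2*u''.1) * (u'.1*u''.2 - u'.2*u''.1)) ^ 2 ≠ 0 :=
      pow_ne_zero 2 (mul_ne_zero (mul_ne_zero h1 h2) h3)
    have key0 : s 0 * ((u.1*u'.2 - u.2*u'.1) * (u.1*u''.2 - u.2*u''.1) * (u'.1*u''.2 - u'.2*u''.1)) ^ 2 = 0 := by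
      linear_combination ((0 - 4*u.2^3*u'.2^3*u''.1^3 + 3*u.2^3*u'.1*u'.2^2*u''.1^2*u''.2 + 3*u.2^3*u'.1^2*u'.2*u''.1*u''.2^2 - 4*u.2^3*u'.1^3*u''.2^3 + 3*u.1*u.2^2*u'.2^3*u''.1^2*u''.2 - 6*u.1*u.2^2*u'.1*u'.2^2*u''.1*u''.2^2 + 3*u.1*u.2^2*u'.1^2*u'.2*u''.2^3 + 3*u.1^2*u.2*u'.2^3*u''.1*u''.2^2 + 3*u.1^2*u.2*u'.1*u'.2^2*u''.2^3 - 4*u.1^3*u'.2^3*u''.2^3)) * e0 + ((0 - 3*u.2^3*u'.1*u'.2^2*u''.1^3 + 6*u.2^3*u'.1^2*u'.2*u''.1^2*u''.2 - 3*u.2^3*u'.1^3*u''.1*u''.2^2 - 3*u.1*u.2^2*u'.2^3*u''.1^3 - 3*u.1*u.2^2*u'.1^3*u''.2^3 + 6*u.1^2*u.2*u'.2^3*u''.1^2*u''.2 + 6*u.1^2*u.2*u'.1^2*u'.2*u''.2^3 - 3*u.1^3*u'.2^3*u''.1*u''.2^2 - 3*u.1^3*u'.1*u'.2^2*u''.2^3))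 * e1 + ((6*u.2^3*u'.2^3*u''.1^2*u''.2 - 6*u.2^3*u'.1*u'.2^2*u''.1*u''.2^2 + 6*u.2^3*u'.1^2*u'.2*u''.2^3 - 6*u.1*u.2^2*u'.2^3*u''.1*u''.2^2 - 6*u.1*u.2^2*u'.1*u'.2^2*u''.2^3 + 6*u.1^2*u.2*u'.2^3*u''.2^3)) * e2 + ((2*u.2^3*u'.2^3*u''.1^3 + 2*u.2^3*u'.1^3*u''.2^3 - 6*u.1*u.2^2*u'.1*u'.2^2*u''.1*u''.2^2 + 2*u.1^3*u'.2^3*u''.2^3)) * e3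
    have key1 : s 1 * ((u.1*u'.2 - u.2*u'.1) * (u.1*u''.2 - u.2*u''.1) * (u'.1*u''.2 - u'.2*u''.1)) ^ 2 = 0 := by
      linear_combination ((2*u.2^3*u'.1*u'.2^2*u''.1^3 - 2*u.2^3*u'.1^2*u'.2*u''.1^2*u''.2 + 2*u.2^3*u'.1^3*u''.1*u''.2^2 + 2*u.1*u.2^2*u'.2^3*u''.1^3 - 2*u.1*u.2^2*u'.1*u'.2^2*u''.1^2*u''.2 - 2*u.1*u.2^2*u'.1^2*u'.2*u''.1*u''.2^2 + 2*u.1*u.2^2*u'.1^3*u''.2^3 - 2*u.1^2*u.2*u'.2^3*u''.1^2*u''.2 - 2*u.1^2*u.2*u'.1*u'.2^2*u''.1*u''.2^2 - 2*u.1^2*u.2*u'.1^2*u'.2*u''.2^3 + 2*u.1^3*u'.2^3*u''.1*u''.2^2 + 2*u.1^3*u'.1*u'.2^2*u''.2^3)) * e0 + ((6*u.1*u.2^2*u'.1*u'.2^2*u''.1^3 - 6*u.1*u.2^2*u'.1^2*u'.2*u''.1^2*u''.2 + 6*u.1*u.2^2*u'.1^3*u''.1*u''.2^2 - 6*u.1^2*u.2*u'.1*u'.2^2*u''.1^2*u''.2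 - 6*u.1^2*u.2*u'.1^2*u'.2*u''.1*u''.2^2 + 6*u.1^3*u'.1*u'.2^2*u''.1*u''.2^2)) * e1 + ((0 - 3*u.2^3*u'.1*u'.2^2*u''.1^2*u''.2 - 3*u.2^3*u'.1^2*u'.2*u''.1*u''.2^2 - 3*u.1*u.2^2*u'.2^3*u''.1^2*u''.2 + 18*u.1*u.2^2*u'.1*u'.2^2*u''.1*u''.2^2 - 3*u.1*u.2^2*u'.1^2*u'.2*u''.2^3 - 3*u.1^2*u.2*u'.2^3*u''.1*u''.2^2 - 3*u.1^2*u.2*u'.1*u'.2^2*u''.2^3)) * e2 + ((0 - u.2^3*u'.1*u'.2^2*u''.1^3 - 2*u.2^3*u'.1^2*u'.2*u''.1^2*u''.2 - u.2^3*u'.1^3*u''.1*u''.2^2 - u.1*u.2^2*u'.2^3*u''.1^3 + 4*u.1*u.2^2*u'.1*u'.2^2*u''.1^2*u''.2 + 4*u.1*u.2^2*u'.1^2*u'.2*u''.1*u''.2^2 - u.1*u.2^2*u'.1^3*u''.2^3 - 2*u.1^2*u.2*u'.2^3*u''.1^2*u''.2 + 4*u.1^2*u.2*u'.1*u'.2^2*u''.1*u''.2^2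 - 2*u.1^2*u.2*u'.1^2*u'.2*u''.2^3 - u.1^3*u'.2^3*u''.1*u''.2^2 - u.1^3*u'.1*u'.2^2*u''.2^3)) * e3
    have key2 : s 2 * ((u.1*u'.2 - u.2*u'.1) * (u.1*u''.2 - u.2*u''.1) * (u'.1*u''.2 - u'.2*u''.1)) ^ 2 = 0 := by
      linear_combination ((u.2^3*u'.1^2*u'.2*u''.1^3 + u.2^3*u'.1^3*u''.1^2*u''.2 + 2*u.1*u.2^2*u'.1*u'.2^2*u''.1^3 - 4*u.1*u.2^2*u'.1^2*u'.2*u''.1^2*u''.2 + 2*u.1*u.2^2*u'.1^3*u''.1*u''.2^2 + u.1^2*u.2*u'.2^3*u''.1^3 - 4*u.1^2*u.2*u'.1*u'.2^2*u''.1^2*u''.2 - 4*u.1^2*u.2*u'.1^2*u'.2*u''.1*u''.2^2 + u.1^2*u.2*u'.1^3*u''.2^3 + u.1^3*u'.2^3*u''.1^2*u''.2 + 2*u.1^3*u'.1*u'.2^2*u''.1*u''.2^2 + u.1^3*u'.1^2*u'.2*u''.2^3)) * e0 + ((3*u.1*u.2^2*u'.1^2*u'.2*u''.1^3 + 3*u.1*u.2^2*u'.1^3*u''.1^2*u''.2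 + 3*u.1^2*u.2*u'.1*u'.2^2*u''.1^3 - 18*u.1^2*u.2*u'.1^2*u'.2*u''.1^2*u''.2 + 3*u.1^2*u.2*u'.1^3*u''.1*u''.2^2 + 3*u.1^3*u'.1*u'.2^2*u''.1^2*u''.2 + 3*u.1^3*u'.1^2*u'.2*u''.1*u''.2^2)) * e1 + ((0 - 6*u.2^3*u'.1^2*u'.2*u''.1^2*u''.2 + 6*u.1*u.2^2*u'.1*u'.2^2*u''.1^2*u''.2 + 6*u.1*u.2^2*u'.1^2*u'.2*u''.1*u''.2^2 - 6*u.1^2*u.2*u'.2^3*u''.1^2*u''.2 + 6*u.1^2*u.2*u'.1*u'.2^2*u''.1*u''.2^2 - 6*u.1^2*u.2*u'.1^2*u'.2*u''.2^3)) * e2 + ((0 - 2*u.2^3*u'.1^2*u'.2*u''.1^3 - 2*u.2^3*u'.1^3*u''.1^2*u''.2 + 2*u.1*u.2^2*u'.1*u'.2^2*u''.1^3 + 2*u.1*u.2^2*u'.1^2*u'.2*u''.1^2*u''.2 + 2*u.1*u.2^2*u'.1^3*u''.1*u''.2^2 - 2*u.1^2*u.2*u'.2^3*u''.1^3 + 2*u.1^2*u.2*u'.1*u'.2^2*u''.1^2*u''.2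 + 2*u.1^2*u.2*u'.1^2*u'.2*u''.1*u''.2^2 - 2*u.1^2*u.2*u'.1^3*u''.2^3 - 2*u.1^3*u'.2^3*u''.1^2*u''.2 + 2*u.1^3*u'.1*u'.2^2*u''.1*u''.2^2 - 2*u.1^3*u'.1^2*u'.2*u''.2^3)) * e3
    have key3 : s 3 * ((u.1*u'.2 - u.2*u'.1) * (u.1*u''.2 - u.2*u''.1) * (u'.1*u''.2 - u'.2*u''.1)) ^ 2 = 0 := by
      linear_combination ((2*u.2^3*u'.1^3*u''.1^3 - 6*u.1^2*u.2*u'.1^2*u'.2*u''.1^2*u''.2 + 2*u.1^3*u'.2^3*u''.1^3 + 2*u.1^3*u'.1^3*u''.2^3)) * e0 + ((6*u.1*u.2^2*u'.1^3*u''.1^3 - 6*u.1^2*u.2*u'.1^2*u'.2*u''.1^3 - 6*u.1^2*u.2*u'.1^3*u''.1^2*u''.2 + 6*u.1^3*u'.1*u'.2^2*u''.1^3 - 6*u.1^3*u'.1^2*u'.2*u''.1^2*u''.2 + 6*u.1^3*u'.1^3*u''.1*u''.2^2)) * e1 + ((0 - 3*u.2^3*u'.1^2*u'.2*u''.1^3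 - 3*u.2^3*u'.1^3*u''.1^2*u''.2 + 6*u.1*u.2^2*u'.1*u'.2^2*u''.1^3 + 6*u.1*u.2^2*u'.1^3*u''.1*u''.2^2 - 3*u.1^2*u.2*u'.2^3*u''.1^3 - 3*u.1^2*u.2*u'.1^3*u''.2^3 - 3*u.1^3*u'.2^3*u''.1^2*u''.2 + 6*u.1^3*u'.1*u'.2^2*u''.1*u''.2^2 - 3*u.1^3*u'.1^2*u'.2*u''.2^3)) * e2 + ((0 - 4*u.2^3*u'.1^3*u''.1^3 + 3*u.1*u.2^2*u'.1^2*u'.2*u''.1^3 + 3*u.1*u.2^2*u'.1^3*u''.1^2*u''.2 + 3*u.1^2*u.2*u'.1*u'.2^2*u''.1^3 - 6*u.1^2*u.2*u'.1^2*u'.2*u''.1^2*u''.2 + 3*u.1^2*u.2*u'.1^3*u''.1*u''.2^2 - 4*u.1^3*u'.2^3*u''.1^3 + 3*u.1^3*u'.1*u'.2^2*u''.1^2*u''.2 + 3*u.1^3*u'.1^2*u'.2*u''.1*u''.2^2 - 4*u.1^3*u'.1^3*u''.2^3)) * e3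
    funext i
    fin_cases i
    · exact (mul_eq_zero.mp key0).resolve_right hP
    · exact (mul_eq_zero.mp key1).resolve_right hP
    · exact (mul_eq_zero.mp key2).resolve_right hP
    · exact (mul_eq_zero.mp key3).resolve_right hP
  · rintro rfl
    ext i j
    fin_cases i <;> fin_cases j <;> simp [momentMap]

end
end

section
/- Let r, s ∈ ℂ⁴ and suppose f_r = u²·u′ where u = u₁y−u₂x and u′ are independent linear forms. Then the moment-map matrix [r,s] = 0 if and only if there exists c ∈ ℂ with f_s(x,y) = c·(u₂y+u₁x)³ for all x, y ∈ ℂ. (Here u₂y+u₁x is the linear form with coefficient vector (v₁,v₂) = (u₂,−u₁), the unique line up to scalar perpendicular to u in the sense that u₁v₁+u₂v₂ = 0.) -/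
noncomputable section

open Matrix

/-- if `f_r = u²·u′` with `u, u′` independent then `[r,s] = 0` iff
`f_s = c·(u₂y+u₁x)³` for some `c`. -/
theorem stmt13 (r s : Fin 4 → ℂ) (u u' : ℂ × ℂ) (h : indepLF u u')
    (hr : ∀ x y : ℂ, fcub r x y = (linForm u x y) ^ 2 * linForm u' x y) :
    momentMap r s = 0 ↔
      ∃ c : ℂ, ∀ x y : ℂ, fcub s x y = c * (u.2 * y + u.1 * x) ^ 3 := by
  have hδ : u.1 * u'.2 - u.2 * u'.1 ≠ 0 := h
  have h1 := hr 0 1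
  have h2 := hr 1 0
  have h3 := hr 1 1
  have h4 := hr (-1) 1
  simp only [fcub, linForm] at h1 h2 h3 h4
  have hr0 : r 0 = u.1 ^ 2 * u'.1 := by linear_combination h1
  have hr3 : r 3 = u.2 ^ 2 * u'.2 := by linear_combination -h2
  have hr1 : r 1 = (u.1 ^ 2 * u'.2 + 2 * u.1 * u.2 * u'.1) / 3 := by
    linear_combination (h4 - h3) / 6 - hr3 / 3
  have hr2 : r 2 = -(u.2 ^ 2 * u'.1 + 2 * u.1 * u.2 * u'.2) / 3 := by
    linear_combination (-(h4 + h3)) / 6 + hr0 / 3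
  constructor
  · intro hM
    have e00 : r 0 * s 0 + 2 * r 1 * s 1 + r 2 * s 2 = 0 := by
      simpa [momentMap] using congr_fun (congr_fun hM 0) 0
    have e01 : -(r 1 * s 0) + 2 * r 2 * s 1 + r 3 * s 2 = 0 := by
      simpa [momentMap] using congr_fun (congr_fun hM 0) 1
    have e10 : -(r 0 * s 1) + 2 * r 1 * s 2 + r 2 * s 3 = 0 := by
      simpa [momentMap] using congr_fun (congr_fun hM 1) 0
    have e11 : r 1 * s 1 + 2 * r 2 * s 2 + r 3 * s 3 = 0 := by
      simpa [momentMap] using congr_fun (congr_fun hM 1) 1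
    simp only [hr0, hr1, hr2, hr3] at e00 e01 e10 e11
    have K1 : u.1 ^ 2 * s 0 + u.2 ^ 2 * s 2 = 0 := by
      have hK : (u.1 * u'.2 - u.2 * u'.1) ^ 2 * (u.1 ^ 2 * s 0 + u.2 ^ 2 * s 2) = 0 := by
        linear_combination (-3 * (u.1 ^ 2 * u'.2 + 2 * u.1 * u.2 * u'.1)) * e01
          - 3 * (u.2 ^ 2 * u'.1 + 2 * u.1 * u.2 * u'.2) * e00
      exact (mul_eq_zero.mp hK).resolve_left (pow_ne_zero 2 hδ)
    have K2 : u.1 ^ 2 * s 1 - u.2 ^ 2 * s 3 = 0 := by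
      have hK : (u.1 * u'.2 - u.2 * u'.1) ^ 2 * (u.1 ^ 2 * s 1 - u.2 ^ 2 * s 3) = 0 := by
        linear_combination (3 * (u.1 ^ 2 * u'.2 + 2 * u.1 * u.2 * u'.1)) * e11
          + 3 * (u.2 ^ 2 * u'.1 + 2 * u.1 * u.2 * u'.2) * e10
      exact (mul_eq_zero.mp hK).resolve_left (pow_ne_zero 2 hδ)
    have kb : u.2 * (u.1 * s 0 + u.2 * s 1) = 0 := by
      have hK : (u.1 * u'.2 - u.2 * u'.1) ^ 2 * (u.2 * (u.1 * s 0 + u.2 * s 1)) = 0 := by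
        linear_combination (-3 / 2 * (u.2 ^ 2 * u'.1 + 2 * u.1 * u.2 * u'.2)) * e01
          + (-9 / 2 * u.2 ^ 2 * u'.2) * e00
      exact (mul_eq_zero.mp hK).resolve_left (pow_ne_zero 2 hδ)
    have ka : u.1 * (u.1 * s 2 - u.2 * s 3) = 0 := by
      have hK : (u.1 * u'.2 - u.2 * u'.1) ^ 2 * (u.1 * (u.1 * s 2 - u.2 * s 3)) = 0 := by
        linear_combination (9 / 2 * u.1 ^ 2 * u'.1) * e11
          + (3 / 2 * (u.1 ^ 2 * u'.2 + 2 * u.1 * u.2 * u'.1)) * e10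
      exact (mul_eq_zero.mp hK).resolve_left (pow_ne_zero 2 hδ)
    by_cases hb : u.2 = 0
    · have ha : u.1 ≠ 0 := by
        intro h0
        exact hδ (by rw [h0, hb]; ring)
      have hs0 : s 0 = 0 := by
        have h' : u.1 ^ 2 * s 0 = 0 := by rw [hb] at K1; linear_combination K1
        exact (mul_eq_zero.mp h').resolve_left (pow_ne_zero 2 ha)
      have hs1 : s 1 = 0 := by
        have h' : u.1 ^ 2 * s 1 = 0 := by rw [hb] at K2; linear_combination K2
        exact (mul_eq_zero.mp h').resolve_left (pow_ne_zero 2 ha)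
      have hs2 : s 2 = 0 := by
        have h' : u.1 ^ 2 * s 2 = 0 := by rw [hb] at ka; linear_combination ka
        exact (mul_eq_zero.mp h').resolve_left (pow_ne_zero 2 ha)
      refine ⟨-(s 3) / u.1 ^ 3, fun x y => ?_⟩
      simp only [fcub]
      rw [hs0, hs1, hs2, hb]
      field_simp
      ring
    · have hb' : u.2 ≠ 0 := hb
      have e1 : u.2 * s 1 = -(u.1 * s 0) := by
        have h' := (mul_eq_zero.mp kb).resolve_left hb'
        linear_combination h'
      have e2 : u.2 ^ 2 * s 2 = -(u.1 ^ 2 * s 0) := by linear_combination K1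
      have e3 : u.2 ^ 3 * s 3 = -(u.1 ^ 3 * s 0) := by
        linear_combination -u.2 * K2 + u.1 ^ 2 * e1
      have f1 : s 1 = -(u.1 * s 0) / u.2 := by
        field_simp
        linear_combination e1
      have f2 : s 2 = -(u.1 ^ 2 * s 0) / u.2 ^ 2 := by
        field_simp
        linear_combination e2
      have f3 : s 3 = -(u.1 ^ 3 * s 0) / u.2 ^ 3 := by
        field_simp
        linear_combination e3
      refine ⟨s 0 / u.2 ^ 3, fun x y => ?_⟩
      simp only [fcub]
      rw [f1, f2, f3]
      field_simp
      ring
  · rintro ⟨c, hc⟩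
    have g1 := hc 0 1
    have g2 := hc 1 0
    have g3 := hc 1 1
    have g4 := hc (-1) 1
    simp only [fcub] at g1 g2 g3 g4
    have hs0 : s 0 = c * u.2 ^ 3 := by linear_combination g1
    have hs3 : s 3 = -(c * u.1 ^ 3) := by linear_combination -g2
    have hs1 : s 1 = -(c * u.2 ^ 2 * u.1) := by linear_combination (g4 - g3) / 6 - hs3 / 3
    have hs2 : s 2 = -(c * u.2 * u.1 ^ 2) := by linear_combination (-(g4 + g3)) / 6 + hs0 / 3
    ext i j
    fin_cases i <;> fin_cases j <;> simp [momentMap] <;>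
      simp only [hr0, hr1, hr2, hr3, hs0, hs1, hs2, hs3] <;> ring

end
end

section
/- Let r, s ∈ ℂ⁴ and suppose f_r = u³ for a nonzero linear form u = u₁y−u₂x. Then the moment-map matrix [r,s] = 0 if and only if there exists a linear form ℓ with f_s(x,y) = (u₂y+u₁x)²·ℓ(x,y) for all x, y ∈ ℂ. (Here u₂y+u₁x is the linear form with coefficient vector (u₂,−u₁), perpendicular to u.) -/
noncomputable section

open Matrix

/-- if `f_r = u³` for a nonzero linear form `u` then `[r,s] = 0` iff
`(u₂y+u₁x)²` divides `f_s`. -/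
theorem stmt14 (r s : Fin 4 → ℂ) (u : ℂ × ℂ) (hu : u ≠ 0)
    (hr : ∀ x y : ℂ, fcub r x y = (linForm u x y) ^ 3) :
    momentMap r s = 0 ↔
      ∃ m : ℂ × ℂ, ∀ x y : ℂ,
        fcub s x y = (u.2 * y + u.1 * x) ^ 2 * linForm m x y := by
  have h01 := hr 0 1
  have h10 := hr 1 0
  have h11 := hr 1 1
  have hm1 := hr (-1) 1
  simp only [fcub, linForm] at h01 h10 h11 hm1
  have e0 : r 0 = u.1 ^ 3 := by linear_combination h01
  have e3 : r 3 = u.2 ^ 3 := by linear_combination -h10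
  have e1 : r 1 = u.1 ^ 2 * u.2 := by linear_combination (hm1 - h11) / 6 - e3 / 3
  have e2 : r 2 = -(u.1 * u.2 ^ 2) := by linear_combination -(h11 + hm1) / 6 + e0 / 3
  have h12 : u.1 ≠ 0 ∨ u.2 ≠ 0 := by
    by_contra h
    push_neg at h
    exact hu (Prod.ext h.1 h.2)
  constructor
  · intro hM
    have h00 : r 0 * s 0 + 2 * r 1 * s 1 + r 2 * s 2 = 0 := by
      have := congrFun (congrFun hM 0) 0; simpa [momentMap] using this
    have h01' : -(r 1 * s 0) + 2 * r 2 * s 1 + r 3 * s 2 = 0 := by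
      have := congrFun (congrFun hM 0) 1; simpa [momentMap] using this
    have h10' : -(r 0 * s 1) + 2 * r 1 * s 2 + r 2 * s 3 = 0 := by
      have := congrFun (congrFun hM 1) 0; simpa [momentMap] using this
    have h11' : r 1 * s 1 + 2 * r 2 * s 2 + r 3 * s 3 = 0 := by
      have := congrFun (congrFun hM 1) 1; simpa [momentMap] using this
    rcases h12 with h1 | h2
    · -- case u.1 ≠ 0
      have hA : u.1 ^ 2 * s 0 + 2 * u.1 * u.2 * s 1 - u.2 ^ 2 * s 2 = 0 := by
        apply mul_left_cancel₀ h1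
        linear_combination h00 - s 0 * e0 - 2 * s 1 * e1 - s 2 * e2
      have hB : u.1 ^ 2 * s 1 - 2 * u.1 * u.2 * s 2 + u.2 ^ 2 * s 3 = 0 := by
        apply mul_left_cancel₀ h1
        linear_combination -h10' - s 1 * e0 + 2 * s 2 * e1 + s 3 * e2
      refine ⟨((-3 * u.1 * s 2 + 2 * u.2 * s 3) / u.1 ^ 3, s 3 / u.1 ^ 2), fun x y => ?_⟩
      have key : u.1 ^ 3 * fcub s x y =
          (u.2 * y + u.1 * x) ^ 2 * ((-3 * u.1 * s 2 + 2 * u.2 * s 3) * y - u.1 * s 3 * x) := by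
        simp only [fcub]
        linear_combination (u.1 * y ^ 3) * hA + (-2 * u.2 * y ^ 3 - 3 * u.1 * x * y ^ 2) * hB
      refine mul_left_cancel₀ (pow_ne_zero 3 h1) ?_
      rw [key]
      simp only [linForm]
      field_simp
    · -- case u.2 ≠ 0
      have hA : u.1 ^ 2 * s 0 + 2 * u.1 * u.2 * s 1 - u.2 ^ 2 * s 2 = 0 := by
        apply mul_left_cancel₀ h2
        linear_combination -h01' - s 0 * e1 + 2 * s 1 * e2 + s 2 * e3
      have hB : u.1 ^ 2 * s 1 - 2 * u.1 * u.2 * s 2 + u.2 ^ 2 * s 3 = 0 := by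
        apply mul_left_cancel₀ h2
        linear_combination h11' - s 1 * e1 - 2 * s 2 * e2 - s 3 * e3
      refine ⟨(s 0 / u.2 ^ 2, (2 * u.1 * s 0 + 3 * u.2 * s 1) / u.2 ^ 3), fun x y => ?_⟩
      have key : u.2 ^ 3 * fcub s x y =
          (u.2 * y + u.1 * x) ^ 2 * (u.2 * s 0 * y - (2 * u.1 * s 0 + 3 * u.2 * s 1) * x) := by
        simp only [fcub]
        linear_combination (3 * u.2 * y * x ^ 2 + 2 * u.1 * x ^ 3) * hA - u.2 * x ^ 3 * hB
      refine mul_left_cancel₀ (pow_ne_zero 3 h2) ?_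
      rw [key]
      simp only [linForm]
      field_simp
  · rintro ⟨m, hm⟩
    have g01 := hm 0 1
    have g10 := hm 1 0
    have g11 := hm 1 1
    have gm1 := hm (-1) 1
    simp only [fcub, linForm] at g01 g10 g11 gm1
    have f0 : s 0 = m.1 * u.2 ^ 2 := by linear_combination g01
    have f3 : s 3 = u.1 ^ 2 * m.2 := by linear_combination -g10
    have f1 : s 1 = -(2 * u.1 * u.2 * m.1 - u.2 ^ 2 * m.2) / 3 := by
      linear_combination (gm1 - g11) / 6 - f3 / 3
    have f2 : s 2 = -(u.1 ^ 2 * m.1 - 2 * u.1 * u.2 * m.2) / 3 := by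
      linear_combination -(g11 + gm1) / 6 + f0 / 3
    have z00 : r 0 * s 0 + 2 * r 1 * s 1 + r 2 * s 2 = 0 := by
      rw [e0, e1, e2, f0, f1, f2]; ring
    have z01 : -(r 1 * s 0) + 2 * r 2 * s 1 + r 3 * s 2 = 0 := by
      rw [e1, e2, e3, f0, f1, f2]; ring
    have z10 : -(r 0 * s 1) + 2 * r 1 * s 2 + r 2 * s 3 = 0 := by
      rw [e0, e1, e2, f1, f2, f3]; ring
    have z11 : r 1 * s 1 + 2 * r 2 * s 2 + r 3 * s 3 = 0 := by
      rw [e1, e2, e3, f1, f2, f3]; ring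
    ext i j
    fin_cases i <;> fin_cases j
    · exact z00
    · exact z01
    · exact z10
    · exact z11

end
end

section
/- Suppose r, s ∈ ℂ⁴ satisfy: f_r = u²·u′ for independent linear forms u = u₁y−u₂x and u′, and f_s(x,y) = c·(u₂y+u₁x)³ for some c ≠ 0. Then there exists an invertible h ∈ GL₂(ℂ) such that h·(0,1,0,0) = r and h·*(0,0,0,−1) = s. (Note f_{(0,1,0,0)} = −3y²x and f_{(0,0,0,−1)} = x³ form such a pair; thus the regular part Λ₂^reg of the conormal variety over the orbit C₂ is a single GL₂(ℂ)-orbit.) -/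
noncomputable section

open Matrix

/-- the regular part of the conormal variety over the orbit `C₂` is a
single `GL₂(ℂ)`-orbit, with base point `(c₂, c₂^*) = ((0,1,0,0), (0,0,0,−1))`. -/
theorem stmt15 (r s : Fin 4 → ℂ) (u u' : ℂ × ℂ) (huu' : indepLF u u') (c : ℂ) (hc : c ≠ 0)
    (hr : ∀ x y : ℂ, fcub r x y = (linForm u x y) ^ 2 * linForm u' x y)
    (hs : ∀ x y : ℂ, fcub s x y = c * (u.2 * y + u.1 * x) ^ 3) :
    ∃ a b c' d : ℂ, a * d - b * c' ≠ 0 ∧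
      act a b c' d ![0, 1, 0, 0] = r ∧ dualAct a b c' d ![0, 0, 0, -1] = s := by
  set Δ := u.1 * u'.2 - u.2 * u'.1 with hΔdef
  have hΔ : Δ ≠ 0 := huu'
  obtain ⟨μ, hμ⟩ := IsAlgClosed.exists_pow_nat_eq ((3 * c * Δ)⁻¹) (n := 2) (by norm_num)
  have h3cΔ : (3 : ℂ) * c * Δ ≠ 0 :=
    mul_ne_zero (mul_ne_zero three_ne_zero hc) hΔ
  have hμ' : μ ^ 2 * (3 * c * Δ) = 1 := by rw [hμ]; field_simp
  have hμ0 : μ ≠ 0 := by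
    intro h; rw [h] at hμ'; simp at hμ'
  -- extract coefficients of r
  have e1 := hr 0 1
  have e2 := hr 1 0
  have e3 := hr 1 1
  have e4 := hr (-1) 1
  simp only [fcub, linForm] at e1 e2 e3 e4
  have hr0 : r 0 = u.1 ^ 2 * u'.1 := by linear_combination e1
  have hr3 : r 3 = u.2 ^ 2 * u'.2 := by linear_combination -e2
  have hr1 : r 1 = (u.1 ^ 2 * u'.2 + 2 * u.1 * u.2 * u'.1) / 3 := by
    linear_combination (e4 - e3) / 6 + e2 / 3
  have hr2 : r 2 = -(u.2 ^ 2 * u'.1 + 2 * u.1 * u.2 * u'.2) / 3 := by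
    linear_combination -(e4 + e3) / 6 + e1 / 3
  -- extract coefficients of s
  have g1 := hs 0 1
  have g2 := hs 1 0
  have g3 := hs 1 1
  have g4 := hs (-1) 1
  simp only [fcub] at g1 g2 g3 g4
  have hs0 : s 0 = c * u.2 ^ 3 := by linear_combination g1
  have hs3 : s 3 = -(c * u.1 ^ 3) := by linear_combination -g2
  have hs1 : s 1 = -(c * u.2 ^ 2 * u.1) := by
    linear_combination (g4 - g3) / 6 + g2 / 3
  have hs2 : s 2 = -(c * u.2 * u.1 ^ 2) := by
    linear_combination -(g4 + g3) / 6 + g1 / 3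
  have hne : -(μ * Δ ^ 2 / 3) ≠ 0 :=
    neg_ne_zero.mpr (div_ne_zero (mul_ne_zero hμ0 (pow_ne_zero 2 hΔ)) three_ne_zero)
  have hdeteq : -μ * u'.2 * ((Δ / 3) * u.1) - -(Δ / 3) * u.2 * (μ * u'.1) = -(μ * Δ ^ 2 / 3) := by
    rw [hΔdef]; ring
  refine ⟨-μ * u'.2, -(Δ / 3) * u.2, μ * u'.1, (Δ / 3) * u.1, ?_, ?_, ?_⟩
  · rw [hdeteq]; exact hne
  · rw [act, hdeteq, inv_smul_eq_iff₀ hne]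
    funext i
    fin_cases i <;>
      simp [Mmat, mulVec, dotProduct, Fin.sum_univ_four] <;>
      [rw [hr0]; rw [hr1]; rw [hr2]; rw [hr3]] <;> ring
  · rw [dualAct, hdeteq, inv_smul_eq_iff₀ (pow_ne_zero 2 hne)]
    funext i
    fin_cases i <;>
      simp [Mdual, mulVec, dotProduct, Fin.sum_univ_four] <;>
      [rw [hs0]; rw [hs1]; rw [hs2]; rw [hs3]]
    · linear_combination (-(Δ ^ 3 * u.2 ^ 3 / 27)) * hμ'
    · linear_combination (Δ ^ 3 * u.2 ^ 2 * u.1 / 27) * hμ'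
    · linear_combination (Δ ^ 3 * u.2 * u.1 ^ 2 / 27) * hμ'
    · linear_combination (Δ ^ 3 * u.1 ^ 3 / 27) * hμ'

end
end

section
/- The simultaneous stabilizer {h ∈ GL₂(ℂ) : h·(0,1,0,0) = (0,1,0,0) and h·*(0,0,0,−1) = (0,0,0,−1)} is exactly the two-element subgroup {[[1,0],[0,1]], [[−1,0],[0,1]]}; in particular the equivariant microlocal fundamental group A^mic of the orbit of cubics with exactly one repeated linear factor has order 2. -/
noncomputable section

open Matrix

/-- the simultaneous stabilizer of `(0,1,0,0)` and the dual vector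
`(0,0,0,−1)` is exactly `{[[1,0],[0,1]], [[−1,0],[0,1]]}`; in particular it has order 2. -/
theorem stmt16 :
    {h : Matrix (Fin 2) (Fin 2) ℂ | h.det ≠ 0 ∧ actM h ![0, 1, 0, 0] = ![0, 1, 0, 0] ∧
        dualActM h ![0, 0, 0, -1] = ![0, 0, 0, -1]} =
      {(!![1, 0; 0, 1] : Matrix (Fin 2) (Fin 2) ℂ), !![-1, 0; 0, 1]} ∧
    Set.ncard
      {h : Matrix (Fin 2) (Fin 2) ℂ | h.det ≠ 0 ∧ actM h ![0, 1, 0, 0] = ![0, 1, 0, 0] ∧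
        dualActM h ![0, 0, 0, -1] = ![0, 0, 0, -1]} = 2 := by
  have hne : (!![1, 0; 0, 1] : Matrix (Fin 2) (Fin 2) ℂ) ≠ !![-1, 0; 0, 1] := by
    intro hEq
    have := congrFun (congrFun hEq 0) 0
    simp at this
    exact one_ne_zero (by linear_combination this / 2 : (1 : ℂ) = 0)
  have hset : {h : Matrix (Fin 2) (Fin 2) ℂ | h.det ≠ 0 ∧ actM h ![0, 1, 0, 0] = ![0, 1, 0, 0] ∧
        dualActM h ![0, 0, 0, -1] = ![0, 0, 0, -1]} =
      {(!![1, 0; 0, 1] : Matrix (Fin 2) (Fin 2) ℂ), !![-1, 0; 0, 1]} := by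
    ext h
    simp only [Set.mem_setOf_eq, Set.mem_insert_iff, Set.mem_singleton_iff]
    constructor
    · rintro ⟨hdet, h1, h2⟩
      rw [Matrix.det_fin_two] at hdet
      set a := h 0 0 with ha'
      set b := h 0 1 with hb'
      set c := h 1 0 with hc'
      set d := h 1 1 with hd'
      have e0 := congrFun h1 0
      have e1 := congrFun h1 1
      have g0 := congrFun h2 0
      have g3 := congrFun h2 3
      simp [actM, act, dualActM, dualAct, Mmat, Mdual, mulVec, dotProduct,
        Fin.sum_univ_four, ← ha', ← hb', ← hc', ← hd'] at e0 e1 g0 g3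
      have hb : b = 0 := g0.resolve_left hdet
      have had : a * d ≠ 0 := by
        intro h0
        exact hdet (by rw [hb]; ring_nf; linear_combination h0)
      have ha : a ≠ 0 := fun h0 => had (by simp [h0])
      have hd : d ≠ 0 := fun h0 => had (by simp [h0])
      have hc : c = 0 := by
        rcases e0 with h0 | h0 | h0
        · exact absurd h0 hdet
        · exact h0
        · exact absurd h0 hd
      rw [hb, hc] at e1 g3
      field_simp at e1 g3
      obtain e1 : d = 1 := by
        have : a * d * (d - 1) = 0 := by linear_combination e1
        rcases mul_eq_zero.mp this with h0 | h0
        · exact absurd h0 had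
        · linear_combination h0
      rw [e1] at g3
      have haa : (a - 1) * (a + 1) = 0 := by linear_combination -g3
      rcases mul_eq_zero.mp haa with h0 | h0
      · left
        have hA : a = 1 := by linear_combination h0
        rw [Matrix.eta_fin_two h, ← ha', ← hb', ← hc', ← hd', hA, hb, hc, e1]
      · right
        have hA : a = -1 := by linear_combination h0
        rw [Matrix.eta_fin_two h, ← ha', ← hb', ← hc', ← hd', hA, hb, hc, e1]
    · rintro (rfl | rfl) <;>
        refine ⟨by norm_num [Matrix.det_fin_two], ?_, ?_⟩ <;>
        funext i <;> fin_cases i <;>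
        simp [actM, act, dualActM, dualAct, Mmat, Mdual, mulVec, dotProduct,
          Fin.sum_univ_four] <;> norm_num
  exact ⟨hset, by rw [hset]; exact Set.ncard_pair hne⟩

end
end

section
/- Suppose r, s ∈ ℂ⁴ satisfy: f_r = c·u³ for some c ≠ 0 and nonzero linear form u = u₁y−u₂x, and f_s = (u₂y+u₁x)²·ℓ for a linear form ℓ independent from u₂y+u₁x. Then there exists an invertible h ∈ GL₂(ℂ) such that h·(1,0,0,0) = r and h·*(0,0,1,0) = s. (Note f_{(1,0,0,0)} = y³ and f_{(0,0,1,0)} = −3x²y form such a pair; thus the regular part Λ₁^reg of the conormal variety over the orbit C₁ is a single GL₂(ℂ)-orbit.) -/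
noncomputable section

open Matrix

/-- the regular part of the conormal variety over the orbit `C₁` is a
single `GL₂(ℂ)`-orbit, with base point `(c₁, c₁^*) = ((1,0,0,0), (0,0,1,0))`. -/
theorem stmt17 (r s : Fin 4 → ℂ) (c : ℂ) (hc : c ≠ 0) (u ℓ : ℂ × ℂ) (hu : u ≠ 0)
    (hℓ : indepLF (u.2, -u.1) ℓ)
    (hr : ∀ x y : ℂ, fcub r x y = c * (linForm u x y) ^ 3)
    (hs : ∀ x y : ℂ, fcub s x y = (u.2 * y + u.1 * x) ^ 2 * linForm ℓ x y) :
    ∃ a b c' d : ℂ, a * d - b * c' ≠ 0 ∧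
      act a b c' d ![1, 0, 0, 0] = r ∧ dualAct a b c' d ![0, 0, 1, 0] = s := by
  have hEne : u.1 * ℓ.1 + u.2 * ℓ.2 ≠ 0 := by
    have h2 := hℓ
    simp only [indepLF] at h2
    intro h; apply h2; linear_combination h
  obtain ⟨t, ht⟩ := IsAlgClosed.exists_pow_nat_eq (k := ℂ)
    (-3 * c / (u.1 * ℓ.1 + u.2 * ℓ.2)) (n := 2) (by norm_num)
  have ht2 : t ^ 2 * (u.1 * ℓ.1 + u.2 * ℓ.2) = -3 * c := by
    rw [ht]; field_simp
  have htne : t ≠ 0 := by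
    intro h; rw [h] at ht2; apply hc; linear_combination ht2 / 3
  have h01 := hr 0 1; have h10 := hr 1 0; have h11 := hr 1 1; have hm := hr (-1) 1
  simp only [fcub, linForm] at h01 h10 h11 hm
  have hr0 : r 0 = c * u.1 ^ 3 := by linear_combination h01
  have hr3 : r 3 = c * u.2 ^ 3 := by linear_combination -h10
  have hr1 : r 1 = c * u.1 ^ 2 * u.2 := by linear_combination hm/6 - h11/6 + h10/3
  have hr2 : r 2 = -(c * u.1 * u.2 ^ 2) := by linear_combination -hm/6 - h11/6 + h01/3
  have g01 := hs 0 1; have g10 := hs 1 0; have g11 := hs 1 1; have gm := hs (-1) 1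
  simp only [fcub, linForm] at g01 g10 g11 gm
  have hs0 : s 0 = u.2 ^ 2 * ℓ.1 := by linear_combination g01
  have hs3 : s 3 = u.1 ^ 2 * ℓ.2 := by linear_combination -g10
  have hs1 : s 1 = -(2 * u.1 * u.2 * ℓ.1 - u.2 ^ 2 * ℓ.2) / 3 := by
    linear_combination gm/6 - g11/6 + g10/3
  have hs2 : s 2 = -(u.1 ^ 2 * ℓ.1 - 2 * u.1 * u.2 * ℓ.2) / 3 := by
    linear_combination -gm/6 - g11/6 + g01/3
  set a : ℂ := -3 / (u.1 * ℓ.1 + u.2 * ℓ.2) ^ 2 * ℓ.1 with ha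
  set b : ℂ := -t * u.2 with hb
  set c' : ℂ := -3 / (u.1 * ℓ.1 + u.2 * ℓ.2) ^ 2 * ℓ.2 with hc'
  set d : ℂ := t * u.1 with hd
  have hdetval : a * d - b * c' = -3 * t / (u.1 * ℓ.1 + u.2 * ℓ.2) := by
    rw [ha, hb, hc', hd]; field_simp; ring
  have hdne : a * d - b * c' ≠ 0 := by
    rw [hdetval]
    exact div_ne_zero (mul_ne_zero (by norm_num) htne) hEne
  refine ⟨a, b, c', d, hdne, ?_, ?_⟩
  · have key : (Mmat a b c' d).mulVec ![1, 0, 0, 0] = (a * d - b * c') • r := by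
      funext i
      fin_cases i
      · simp [Mmat, mulVec, dotProduct, Fin.sum_univ_four, hr0, ha, hb, hc', hd]
        field_simp
        linear_combination (u.1 ^ 3 * (u.1 * ℓ.1 + u.2 * ℓ.2)) * ht2
      · simp [Mmat, mulVec, dotProduct, Fin.sum_univ_four, hr1, ha, hb, hc', hd]
        field_simp
        linear_combination (u.1 ^ 2 * u.2 * (u.1 * ℓ.1 + u.2 * ℓ.2)) * ht2
      · simp [Mmat, mulVec, dotProduct, Fin.sum_univ_four, hr2, ha, hb, hc', hd]
        field_simp
        linear_combination (u.1 * u.2 ^ 2 * (u.1 * ℓ.1 + u.2 * ℓ.2)) * ht2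
      · simp [Mmat, mulVec, dotProduct, Fin.sum_univ_four, hr3, ha, hb, hc', hd]
        field_simp
        linear_combination (u.2 ^ 3 * (u.1 * ℓ.1 + u.2 * ℓ.2)) * ht2
    rw [act, key, inv_smul_smul₀ hdne]
  · have key : (Mdual a b c' d).mulVec ![0, 0, 1, 0] = ((a * d - b * c') ^ 2) • s := by
      funext i
      fin_cases i <;>
        simp [Mdual, mulVec, dotProduct, Fin.sum_univ_four, hs0, hs1, hs2, hs3,
          hdetval, ha, hb, hc', hd] <;>
        field_simp <;>
        ring
    rw [dualAct, key, inv_smul_smul₀ (pow_ne_zero 2 hdne)]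

end
end

section
/- The simultaneous stabilizer {h ∈ GL₂(ℂ) : h·(1,0,0,0) = (1,0,0,0) and h·*(0,0,1,0) = (0,0,1,0)} is exactly the two-element subgroup {[[1,0],[0,1]], [[1,0],[0,−1]]}; in particular the equivariant microlocal fundamental group A^mic of the orbit of nonzero perfect-cube cubics has order 2. -/
noncomputable section

open Matrix

lemma key_set :
    {h : Matrix (Fin 2) (Fin 2) ℂ | h.det ≠ 0 ∧ actM h ![1, 0, 0, 0] = ![1, 0, 0, 0] ∧
        dualActM h ![0, 0, 1, 0] = ![0, 0, 1, 0]} =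
      {(!![1, 0; 0, 1] : Matrix (Fin 2) (Fin 2) ℂ), !![1, 0; 0, -1]} := by
  ext h
  simp only [Set.mem_setOf_eq, Set.mem_insert_iff, Set.mem_singleton_iff]
  constructor
  · rintro ⟨hdet, h1, h2⟩
    rw [Matrix.det_fin_two] at hdet
    have e3 := congrFun h1 3
    have e0 := congrFun h1 0
    have f3 := congrFun h2 3
    have f2 := congrFun h2 2
    simp only [actM, act, dualActM, dualAct, Mmat, Mdual, Matrix.mulVec, dotProduct,
      Fin.sum_univ_four, Pi.smul_apply, smul_eq_mul] at e3 e0 f3 f2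
    simp at e3 e0 f3 f2
    have hb0 : h 0 1 = 0 := e3.resolve_left hdet
    have had : h 0 0 * h 1 1 ≠ 0 := by
      intro h'; exact hdet (by rw [hb0]; linear_combination h')
    have ha0 : h 0 0 ≠ 0 := fun h' => had (by rw [h']; ring)
    have hd0 : h 1 1 ≠ 0 := fun h' => had (by rw [h']; ring)
    have hc0 : h 1 0 = 0 := by
      rcases f3 with h' | h' | h'
      · exact absurd h' hdet
      · exact h'
      · exact absurd h' hd0
    rw [hb0] at e0 f2
    rw [hc0] at f2
    have hdet' : h 0 0 * h 1 1 - 0 * h 1 0 ≠ 0 := by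
      intro h'; exact had (by linear_combination h')
    have ea : h 1 1 ^ 2 = h 0 0 := by
      field_simp at e0
      rcases mul_eq_zero.mp (show (h 1 1 ^ 2 - h 0 0) * h 1 1 = 0 by linear_combination e0)
        with h' | h'
      · linear_combination h'
      · exact absurd h' hd0
    have ea1 : h 0 0 = 1 := by
      field_simp at f2
      have key : h 0 0 * h 1 1 ^ 2 = (h 0 0 * h 1 1) ^ 2 := by linear_combination f2
      have : h 0 0 * (h 1 1 ^ 2 * (h 0 0 - 1)) = 0 := by linear_combination -key
      rcases mul_eq_zero.mp this with h' | h'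
      · exact absurd h' ha0
      · rcases mul_eq_zero.mp h' with h'' | h''
        · exact absurd h'' (pow_ne_zero _ hd0)
        · linear_combination h''
    have hd1 : h 1 1 = 1 ∨ h 1 1 = -1 := by
      have hsq : h 1 1 ^ 2 = 1 := by rw [ea, ea1]
      rcases mul_eq_zero.mp (show (h 1 1 - 1) * (h 1 1 + 1) = 0 by linear_combination hsq)
        with h' | h'
      · left; linear_combination h'
      · right; linear_combination h'
    rcases hd1 with h' | h'
    · left; ext i j; fin_cases i <;> fin_cases j <;> simp [hb0, hc0, ea1, h']
    · right; ext i j; fin_cases i <;> fin_cases j <;> simp [hb0, hc0, ea1, h']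
  · rintro (rfl | rfl) <;>
    · refine ⟨by norm_num [Matrix.det_fin_two], ?_, ?_⟩ <;>
      · funext i
        fin_cases i <;>
          norm_num [actM, act, dualActM, dualAct, Mmat, Mdual, Matrix.mulVec,
            dotProduct, Fin.sum_univ_four]

/-- the simultaneous stabilizer of `(1,0,0,0)` and the dual vector
`(0,0,1,0)` is exactly `{[[1,0],[0,1]], [[1,0],[0,−1]]}`; in particular it has order 2. -/
theorem stmt18 :
    {h : Matrix (Fin 2) (Fin 2) ℂ | h.det ≠ 0 ∧ actM h ![1, 0, 0, 0] = ![1, 0, 0, 0] ∧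
        dualActM h ![0, 0, 1, 0] = ![0, 0, 1, 0]} =
      {(!![1, 0; 0, 1] : Matrix (Fin 2) (Fin 2) ℂ), !![1, 0; 0, -1]} ∧
    Set.ncard
      {h : Matrix (Fin 2) (Fin 2) ℂ | h.det ≠ 0 ∧ actM h ![1, 0, 0, 0] = ![1, 0, 0, 0] ∧
        dualActM h ![0, 0, 1, 0] = ![0, 0, 1, 0]} = 2 := by
  refine ⟨key_set, ?_⟩
  rw [key_set]
  rw [Set.ncard_pair]
  intro h
  have := congrFun (congrFun h 1) 1
  simp at this
  exact one_ne_zero (show (1 : ℂ) = 0 by linear_combination this / 2)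

end
end

section
/- The simultaneous stabilizer {h ∈ GL₂(ℂ) : h·(1,0,0,0) = (1,0,0,0) and h·*(0,0,0,−1) = (0,0,0,−1)} (the subgroup of GL₂(ℂ) fixing the cubic y³ together with the dual cubic x³) is exactly the set {[[d²,0],[c,d]] : c ∈ ℂ, d ∈ ℂ, d³ = 1}; moreover this subgroup has exactly three connected components (one for each cube root of unity d), so its component group is cyclic of order 3. -/
noncomputable section

open Matrix

/-- key characterization -/
theorem key (h : Matrix (Fin 2) (Fin 2) ℂ) :
    (h.det ≠ 0 ∧ actM h ![1, 0, 0, 0] = ![1, 0, 0, 0] ∧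
        dualActM h ![0, 0, 0, -1] = ![0, 0, 0, -1]) ↔
      ∃ c d : ℂ, d ^ 3 = 1 ∧ h = !![d ^ 2, 0; c, d] := by
  set a := h 0 0 with ha'
  set b := h 0 1 with hb'
  set c := h 1 0 with hc'
  set d := h 1 1 with hd'
  constructor
  · rintro ⟨hdet, h1, h2⟩
    rw [Matrix.det_fin_two] at hdet
    have e0 := congrFun h1 0
    have e3 := congrFun h1 3
    have f3 := congrFun h2 3
    simp [actM, act, Mmat, dualActM, dualAct, Mdual, mulVec, dotProduct,
      Fin.sum_univ_four, ← ha', ← hb', ← hc', ← hd'] at e0 e3 f3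
    have hΔ : a * d - b * c ≠ 0 := hdet
    have hb : b = 0 := e3.resolve_left hΔ
    rw [inv_mul_eq_one₀ hΔ] at e0
    rw [inv_mul_eq_one₀ (pow_ne_zero 2 hΔ)] at f3
    have hΔ1 : a * d - b * c = 1 := by
      rcases mul_eq_zero.1 (show (a * d - b * c) * ((a * d - b * c) - 1) = 0 by
        linear_combination f3 - e0) with h' | h'
      · exact absurd h' hΔ
      · exact sub_eq_zero.1 h'
    have hd3 : d ^ 3 = 1 := e0.symm.trans hΔ1
    have had : a * d = 1 := by linear_combination hΔ1 + c * hb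
    have ha : a = d ^ 2 := by linear_combination d ^ 2 * had - a * hd3
    refine ⟨c, d, hd3, ?_⟩
    conv_lhs => rw [Matrix.eta_fin_two h]
    rw [← ha', ← hb', ← hc', ← hd', hb, ha]
  · rintro ⟨c₀, d₀, hd3, hm⟩
    have hd0 : d₀ ≠ 0 := by
      intro h0; rw [h0] at hd3; norm_num at hd3
    have hae : a = d₀ ^ 2 := by rw [ha', hm]; simp
    have hbe : b = 0 := by rw [hb', hm]; simp
    have hce : c = c₀ := by rw [hc', hm]; simp
    have hde : d = d₀ := by rw [hd', hm]; simp
    refine ⟨?_, ?_, ?_⟩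
    · rw [Matrix.det_fin_two, ← ha', ← hb', ← hc', ← hd', hae, hbe, hde]
      simp only [zero_mul, sub_zero]
      intro hz
      rw [show d₀ ^ 2 * d₀ = d₀ ^ 3 by ring, hd3] at hz
      norm_num at hz
    · funext i
      simp only [actM, act, Mmat, mulVec, dotProduct, Fin.sum_univ_four, ← ha', ← hb', ← hc',
        ← hd', hae, hbe, hce, hde]
      have hΔ : d₀ ^ 2 * d₀ - 0 * c₀ = 1 := by
        rw [show d₀ ^ 2 * d₀ = d₀ ^ 3 by ring, hd3]; ring
      fin_cases i <;>
        simp [hΔ, hd3] <;> ring_nf <;> simp [hd3] <;> linear_combination hd3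
    · funext i
      simp only [dualActM, dualAct, Mdual, mulVec, dotProduct, Fin.sum_univ_four, ← ha', ← hb',
        ← hc', ← hd', hae, hbe, hce, hde]
      have hΔ : d₀ ^ 2 * d₀ - 0 * c₀ = 1 := by
        rw [show d₀ ^ 2 * d₀ = d₀ ^ 3 by ring, hd3]; ring
      fin_cases i <;>
        simp [hΔ, hd3] <;> ring_nf <;> simp [hd3] <;> linear_combination hd3

theorem part2 :
    Nat.card (ConnectedComponents
      {h : Matrix (Fin 2) (Fin 2) ℂ // h.det ≠ 0 ∧ actM h ![1, 0, 0, 0] = ![1, 0, 0, 0] ∧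
        dualActM h ![0, 0, 0, -1] = ![0, 0, 0, -1]}) = 3 := by
  set S := {h : Matrix (Fin 2) (Fin 2) ℂ // h.det ≠ 0 ∧ actM h ![1, 0, 0, 0] = ![1, 0, 0, 0] ∧
        dualActM h ![0, 0, 0, -1] = ![0, 0, 0, -1]} with hS
  have h3 : (0:ℕ) < 3 := by norm_num
  let R := {d : ℂ // d ^ 3 = 1}
  let eR : R ≃ (Polynomial.nthRootsFinset 3 (1 : ℂ)) :=
    { toFun := fun d => ⟨d.1, (Polynomial.mem_nthRootsFinset h3 (1 : ℂ)).2 d.2⟩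
      invFun := fun x => ⟨x.1, (Polynomial.mem_nthRootsFinset h3 (1 : ℂ)).1 x.2⟩
      left_inv := fun d => rfl
      right_inv := fun x => rfl }
  haveI : Finite R := Finite.of_equiv _ eR.symm
  have hfc : ∀ h : S, ((h : Matrix (Fin 2) (Fin 2) ℂ) 1 1) ^ 3 = 1 := by
    intro h
    obtain ⟨c, d, hd3, hm⟩ := (key h.1).1 h.2
    rw [hm]; simpa using hd3
  let f : S → R := fun h => ⟨(h : Matrix (Fin 2) (Fin 2) ℂ) 1 1, hfc h⟩
  have hf : Continuous f :=
    Continuous.subtype_mk (Continuous.matrix_elem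
      (continuous_subtype_val : Continuous (fun h : S => (h : Matrix (Fin 2) (Fin 2) ℂ))) 1 1) _
  -- the curve c ↦ !![d²,0;c,d] inside S
  have hmemS : ∀ (c d : ℂ), d ^ 3 = 1 → (!![d ^ 2, 0; c, d] : Matrix (Fin 2) (Fin 2) ℂ).det ≠ 0 ∧
      actM !![d ^ 2, 0; c, d] ![1, 0, 0, 0] = ![1, 0, 0, 0] ∧
      dualActM !![d ^ 2, 0; c, d] ![0, 0, 0, -1] = ![0, 0, 0, -1] :=
    fun c d hd3 => (key _).2 ⟨c, d, hd3, rfl⟩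
  have hsurj : Function.Surjective hf.connectedComponentsLift := by
    intro d
    refine ⟨ConnectedComponents.mk ⟨!![d.1 ^ 2, 0; 0, d.1], hmemS 0 d.1 d.2⟩, ?_⟩
    rw [hf.connectedComponentsLift_apply_coe]
    exact Subtype.ext (by simp [f])
  have hinj : Function.Injective hf.connectedComponentsLift := by
    intro x y hxy
    obtain ⟨h₁, rfl⟩ := ConnectedComponents.surjective_coe x
    obtain ⟨h₂, rfl⟩ := ConnectedComponents.surjective_coe y
    rw [hf.connectedComponentsLift_apply_coe, hf.connectedComponentsLift_apply_coe] at hxy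
    have hdd : (h₁ : Matrix (Fin 2) (Fin 2) ℂ) 1 1 = (h₂ : Matrix (Fin 2) (Fin 2) ℂ) 1 1 :=
      congrArg Subtype.val hxy
    set d : ℂ := (h₁ : Matrix (Fin 2) (Fin 2) ℂ) 1 1 with hd
    have hd3 : d ^ 3 = 1 := hfc h₁
    let γ : ℂ → S := fun c => ⟨!![d ^ 2, 0; c, d], hmemS c d hd3⟩
    have hγ : Continuous γ := by
      refine Continuous.subtype_mk ?_ _
      refine continuous_pi fun i => continuous_pi fun j => ?_
      fin_cases i <;> fin_cases j <;> simp <;>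
        first | exact continuous_const | exact continuous_id
    have hconn : IsConnected (Set.range γ) := isConnected_range hγ
    have hmem : ∀ h : S, (h : Matrix (Fin 2) (Fin 2) ℂ) 1 1 = d → h ∈ Set.range γ := by
      intro h hh
      obtain ⟨c, d', hd3', hm⟩ := (key h.1).1 h.2
      have : d' = d := by rw [← hh, hm]; simp
      exact ⟨c, Subtype.ext (by rw [hm, this])⟩
    have hsub := hconn.isPreconnected.subset_connectedComponent (hmem h₁ rfl)
    have h2mem : h₂ ∈ connectedComponent h₁ := hsub (hmem h₂ hdd.symm)
    exact ConnectedComponents.coe_eq_coe.2 (connectedComponent_eq h2mem)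
  have := Nat.card_eq_of_bijective _ ⟨hinj, hsurj⟩
  rw [this, Nat.card_congr eR, Nat.card_eq_finsetCard,
    (Complex.isPrimitiveRoot_exp 3 (by norm_num)).card_nthRootsFinset]

/-- the simultaneous stabilizer of the cubic `y³` (i.e. `(1,0,0,0)`) and the
dual cubic `x³` (i.e. `(0,0,0,−1)`) is exactly `{[[d²,0],[c,d]] : c ∈ ℂ, d³ = 1}`, and it
has exactly three connected components. -/
theorem stmt19 :
    {h : Matrix (Fin 2) (Fin 2) ℂ | h.det ≠ 0 ∧ actM h ![1, 0, 0, 0] = ![1, 0, 0, 0] ∧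
        dualActM h ![0, 0, 0, -1] = ![0, 0, 0, -1]} =
      {m : Matrix (Fin 2) (Fin 2) ℂ | ∃ c d : ℂ, d ^ 3 = 1 ∧ m = !![d ^ 2, 0; c, d]} ∧
    Nat.card (ConnectedComponents
      {h : Matrix (Fin 2) (Fin 2) ℂ // h.det ≠ 0 ∧ actM h ![1, 0, 0, 0] = ![1, 0, 0, 0] ∧
        dualActM h ![0, 0, 0, -1] = ![0, 0, 0, -1]}) = 3 := by
  exact ⟨Set.ext fun h => key h, part2⟩

end
end
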